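/- arXiv:2102.07722 — 4 statements merged into one kernel-verified Lean document; each statement's English description precedes it below -/
import Mathlib

section
/- Let β = (β_n) be a Cantor real base and S_β the topological closure (for the prefix distance) of the set D_β = {d_β(x) : x ∈ [0,1)}. A sequence a ∈ ℕ^ℕ belongs to S_β if and only if for all n ∈ ℕ, σ^n(a) ≤_lex d*_{β^{(n)}}(1). -/
open Filter

/-- Product of the first `n+1` terms of the base sequence. -/
noncomputable def cprod (β : ℕ → ℝ) (n : ℕ) : ℝ := ∏ i ∈ Finset.range (n+1), β i

/-- A Cantor real base: all terms exceed 1 and the partial products tend to infinity. -/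
def IsCantorBase (β : ℕ → ℝ) : Prop :=
  (∀ n, 1 < β n) ∧ Tendsto (cprod β) atTop atTop

/-- Value of a real-digit sequence in a Cantor base. -/
noncomputable def valB (β : ℕ → ℝ) (a : ℕ → ℝ) : ℝ := ∑' n, a n / cprod β n

/-- Value of a natural-digit sequence in a Cantor base. -/
noncomputable def valN (β : ℕ → ℝ) (a : ℕ → ℕ) : ℝ := valB β (fun n => (a n : ℝ))

/-- Remainders of the greedy algorithm. -/
noncomputable def greedyRem (β : ℕ → ℝ) (x : ℝ) : ℕ → ℝ
  | 0 => β 0 * x - ⌊β 0 * x⌋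
  | n+1 => β (n+1) * greedyRem β x n - ⌊β (n+1) * greedyRem β x n⌋

/-- Digits of the greedy expansion. -/
noncomputable def greedy (β : ℕ → ℝ) (x : ℝ) : ℕ → ℕ
  | 0 => (⌊β 0 * x⌋).toNat
  | n+1 => (⌊β (n+1) * greedyRem β x n⌋).toNat

/-- Remainders of the quasi-greedy algorithm started at `1`:
at each step the largest digit keeping the remainder strictly positive is chosen. -/
noncomputable def qRem (β : ℕ → ℝ) : ℕ → ℝ
  | 0 => β 0 - (⌈β 0⌉ - 1)
  | n+1 => β (n+1) * qRem β n - (⌈β (n+1) * qRem β n⌉ - 1)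

/-- Digits of the quasi-greedy expansion of `1`. -/
noncomputable def quasiGreedy (β : ℕ → ℝ) : ℕ → ℕ
  | 0 => (⌈β 0⌉ - 1).toNat
  | n+1 => (⌈β (n+1) * qRem β n⌉ - 1).toNat

/-- The `n`-shifted base `β^{(n)}`. -/
def shiftBase (β : ℕ → ℝ) (n : ℕ) : ℕ → ℝ := fun k => β (n + k)

/-- The `n`-fold shift `σ^n` of a digit sequence. -/
def shiftSeq (a : ℕ → ℕ) (n : ℕ) : ℕ → ℕ := fun k => a (n + k)

/-- Strict lexicographic order on digit sequences. -/
def LexLt (a b : ℕ → ℕ) : Prop := ∃ ℓ, (∀ k, k < ℓ → a k = b k) ∧ a ℓ < b ℓ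

/-- Lexicographic order on digit sequences. -/
def LexLe (a b : ℕ → ℕ) : Prop := LexLt a b ∨ a = b

/-- The set of greedy expansions of points of `[0,1)`. -/
def Dset (β : ℕ → ℝ) : Set (ℕ → ℕ) := {a | ∃ x ∈ Set.Ico (0:ℝ) 1, a = greedy β x}

lemma shiftBase_zero (γ : ℕ → ℝ) : shiftBase γ 0 = γ := funext fun k => by simp [shiftBase]
lemma shiftSeq_zero (b : ℕ → ℕ) : shiftSeq b 0 = b := funext fun k => by simp [shiftSeq]
lemma shiftBase_add (γ : ℕ → ℝ) (i j : ℕ) : shiftBase (shiftBase γ i) j = shiftBase γ (i + j) :=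
  funext fun k => by simp [shiftBase, add_assoc]
lemma shiftSeq_add (b : ℕ → ℕ) (i j : ℕ) : shiftSeq (shiftSeq b i) j = shiftSeq b (i + j) :=
  funext fun k => by simp [shiftSeq, add_assoc]
lemma shiftBase_gt (γ : ℕ → ℝ) (h : ∀ n, 1 < γ n) (i : ℕ) : ∀ n, 1 < shiftBase γ i n :=
  fun n => h (i + n)

lemma qRem_bounds (γ : ℕ → ℝ) (h : ∀ n, 1 < γ n) : ∀ n, 0 < qRem γ n ∧ qRem γ n ≤ 1 := by
  intro n
  induction n with
  | zero =>
      have h0 : 1 < γ 0 := h 0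
      have h1 : (⌈γ 0⌉ : ℝ) < γ 0 + 1 := Int.ceil_lt_add_one _
      have h2 : γ 0 ≤ (⌈γ 0⌉ : ℝ) := Int.le_ceil _
      constructor <;> simp only [qRem] <;> linarith
  | succ n ih =>
      have h0 : 1 < γ (n+1) := h (n+1)
      have hu : 0 < γ (n+1) * qRem γ n := mul_pos (by linarith) ih.1
      have h1 : (⌈γ (n+1) * qRem γ n⌉ : ℝ) < γ (n+1) * qRem γ n + 1 := Int.ceil_lt_add_one _
      have h2 : γ (n+1) * qRem γ n ≤ (⌈γ (n+1) * qRem γ n⌉ : ℝ) := Int.le_ceil _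
      constructor <;> simp only [qRem] <;> linarith

lemma quasiGreedy_cast_zero (γ : ℕ → ℝ) (h : ∀ n, 1 < γ n) :
    (quasiGreedy γ 0 : ℝ) = (⌈γ 0⌉ : ℝ) - 1 := by
  have : (1:ℤ) ≤ ⌈γ 0⌉ := by
    have := h 0
    exact Int.one_le_ceil_iff.2 (by linarith)
  have h2 := Int.toNat_of_nonneg (show (0:ℤ) ≤ ⌈γ 0⌉ - 1 by omega)
  simp only [quasiGreedy]
  exact_mod_cast congrArg (Int.cast : ℤ → ℝ) h2

lemma quasiGreedy_cast_succ (γ : ℕ → ℝ) (h : ∀ n, 1 < γ n) (n : ℕ) :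
    (quasiGreedy γ (n+1) : ℝ) = (⌈γ (n+1) * qRem γ n⌉ : ℝ) - 1 := by
  have hu : 0 < γ (n+1) * qRem γ n :=
    mul_pos (by have := h (n+1); linarith) (qRem_bounds γ h n).1
  have : (1:ℤ) ≤ ⌈γ (n+1) * qRem γ n⌉ := Int.one_le_ceil_iff.2 hu
  have h2 := Int.toNat_of_nonneg (show (0:ℤ) ≤ ⌈γ (n+1) * qRem γ n⌉ - 1 by omega)
  simp only [quasiGreedy]
  exact_mod_cast congrArg (Int.cast : ℤ → ℝ) h2

/-- Truncated value: value of the first `m` digits of `b` in base `γ`. -/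
noncomputable def tv : ℕ → (ℕ → ℝ) → (ℕ → ℕ) → ℝ
  | 0, _, _ => 0
  | (m+1), γ, b => ((b 0 : ℝ) + tv m (shiftBase γ 1) (shiftSeq b 1)) / γ 0

lemma tv_nonneg : ∀ (m : ℕ) (γ : ℕ → ℝ) (b : ℕ → ℕ), (∀ n, 1 < γ n) → 0 ≤ tv m γ b := by
  intro m
  induction m with
  | zero => intro γ b h; simp [tv]
  | succ m ih =>
      intro γ b h
      have h0 : 0 < γ 0 := lt_trans one_pos (h 0)
      have := ih (shiftBase γ 1) (shiftSeq b 1) (shiftBase_gt γ h 1)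
      simp only [tv]
      apply div_nonneg _ (le_of_lt h0)
      positivity

lemma tv_congr : ∀ (m : ℕ) (γ : ℕ → ℝ) (b c : ℕ → ℕ), (∀ k, k < m → b k = c k) →
    tv m γ b = tv m γ c := by
  intro m
  induction m with
  | zero => intro _ _ _ _; rfl
  | succ m ih =>
      intro γ b c h
      simp only [tv]
      rw [h 0 (Nat.succ_pos m), ih (shiftBase γ 1) (shiftSeq b 1) (shiftSeq c 1)
        (fun k hk => by simpa [shiftSeq] using h (1+k) (by omega))]

lemma tv_split : ∀ (s t : ℕ) (γ : ℕ → ℝ) (b : ℕ → ℕ), (∀ n, 1 < γ n) →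
    tv (s + t) γ b = tv s γ b +
      tv t (shiftBase γ s) (shiftSeq b s) / ∏ i ∈ Finset.range s, γ i := by
  intro s
  induction s with
  | zero => intro t γ b h; simp [tv, shiftBase_zero, shiftSeq_zero]
  | succ s ih =>
      intro t γ b h
      have h0 : 0 < γ 0 := lt_trans one_pos (h 0)
      have hP : 0 < ∏ i ∈ Finset.range s, shiftBase γ 1 i :=
        Finset.prod_pos fun i _ => lt_trans one_pos (shiftBase_gt γ h 1 i)
      have e1 : s + 1 + t = (s + t) + 1 := by omega
      rw [e1]
      simp only [tv]
      rw [ih t (shiftBase γ 1) (shiftSeq b 1) (shiftBase_gt γ h 1),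
        shiftBase_add, shiftSeq_add]
      have e2 : (1 : ℕ) + s = s + 1 := by omega
      rw [e2]
      have e3 : ∏ i ∈ Finset.range (s+1), γ i = γ 0 * ∏ i ∈ Finset.range s, shiftBase γ 1 i := by
        rw [Finset.prod_range_succ']
        simp only [shiftBase]
        rw [mul_comm]
        congr 1
        exact Finset.prod_congr rfl fun i _ => by rw [add_comm]
      rw [e3]
      field_simp
      ring

lemma tv_one (γ : ℕ → ℝ) (b : ℕ → ℕ) : tv 1 γ b = (b 0 : ℝ) / γ 0 := by
  simp [tv]

lemma tv_quasi (γ : ℕ → ℝ) (h : ∀ n, 1 < γ n) : ∀ m : ℕ,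
    tv (m+1) γ (quasiGreedy γ) = 1 - qRem γ m / ∏ i ∈ Finset.range (m+1), γ i := by
  intro m
  induction m with
  | zero =>
      have h0 : 0 < γ 0 := lt_trans one_pos (h 0)
      rw [tv_one, quasiGreedy_cast_zero γ h]
      simp only [zero_add, Finset.prod_range_one, qRem]
      field_simp
      ring
  | succ m ih =>
      have h0 : 0 < γ (m+1) := lt_trans one_pos (h (m+1))
      have hP : 0 < ∏ i ∈ Finset.range (m+1), γ i :=
        Finset.prod_pos fun i _ => lt_trans one_pos (h i)
      have step := tv_split (m+1) 1 γ (quasiGreedy γ) h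
      rw [tv_one] at step
      have e0 : shiftSeq (quasiGreedy γ) (m+1) 0 = quasiGreedy γ (m+1) := by
        simp [shiftSeq]
      have e1 : shiftBase γ (m+1) 0 = γ (m+1) := by simp [shiftBase]
      rw [e0, e1] at step
      have e2 : m + 1 + 1 = m + 2 := rfl
      rw [step, ih, quasiGreedy_cast_succ γ h m]
      have hq : (⌈γ (m+1) * qRem γ m⌉ : ℝ) - 1 = γ (m+1) * qRem γ m - qRem γ (m+1) := by
        simp only [qRem]; ring
      rw [hq]
      conv_rhs => rw [Finset.prod_range_succ]
      have key : ∀ (P G r r' : ℝ), P ≠ 0 → G ≠ 0 →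
          1 - r/P + (G*r - r')/G/P = 1 - r'/(P*G) := by
        intro P G r r' hP hG
        field_simp
        ring
      exact key _ _ _ _ (ne_of_gt hP) (ne_of_gt h0)

lemma lexLt_asymm {a b : ℕ → ℕ} (h1 : LexLt a b) (h2 : LexLt b a) : False := by
  obtain ⟨l1, hag1, hlt1⟩ := h1
  obtain ⟨l2, hag2, hlt2⟩ := h2
  rcases lt_trichotomy l1 l2 with h | h | h
  · have := hag2 l1 h; omega
  · subst h; omega
  · have := hag1 l2 h; omega

lemma not_lexLe_of_lexLt {a b : ℕ → ℕ} (h : LexLt b a) : ¬ LexLe a b := by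
  rintro (h2 | rfl)
  · exact lexLt_asymm h h2
  · obtain ⟨l, _, hlt⟩ := h; omega

lemma lexLt_of_not_lexLe {a b : ℕ → ℕ} (h : ¬ LexLe a b) : LexLt b a := by
  rw [LexLe, not_or] at h
  obtain ⟨hnlt, hne⟩ := h
  have hex : ∃ k, a k ≠ b k := by
    by_contra hc
    push_neg at hc
    exact hne (funext hc)
  classical
  let ℓ := Nat.find hex
  have hspec : a ℓ ≠ b ℓ := Nat.find_spec hex
  have hag : ∀ k, k < ℓ → a k = b k := fun k hk => by
    by_contra hc
    exact Nat.find_min hex hk hc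
  rcases lt_or_gt_of_ne hspec with h | h
  · exact absurd ⟨ℓ, hag, h⟩ hnlt
  · exact ⟨ℓ, fun k hk => (hag k hk).symm, h⟩

lemma tv_lt_one (m : ℕ) : ∀ (γ : ℕ → ℝ) (b : ℕ → ℕ), (∀ n, 1 < γ n) →
    (∀ j, LexLe (shiftSeq b j) (quasiGreedy (shiftBase γ j))) → tv m γ b < 1 := by
  induction m using Nat.strong_induction_on with
  | _ m ih =>
    intro γ b hγ hb
    match m, ih with
    | 0, _ => simp [tv]
    | m+1, ih =>
      have hP : ∀ s : ℕ, 0 < ∏ i ∈ Finset.range s, γ i :=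
        fun s => Finset.prod_pos fun i _ => lt_trans one_pos (hγ i)
      by_cases hall : ∀ k, k < m+1 → b k = quasiGreedy γ k
      · rw [tv_congr _ _ _ _ hall, tv_quasi γ hγ m]
        have h1 := (qRem_bounds γ hγ m).1
        have h2 : 0 < qRem γ m / ∏ i ∈ Finset.range (m+1), γ i := div_pos h1 (hP (m+1))
        linarith
      · have hle : LexLe b (quasiGreedy γ) := by
          have := hb 0
          rwa [shiftSeq_zero, shiftBase_zero] at this
        obtain ⟨ℓ, hag, hlt⟩ : LexLt b (quasiGreedy γ) := by
          rcases hle with h | h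
          · exact h
          · exact absurd (fun k _ => congrFun h k) hall
        have hℓ : ℓ < m+1 := by
          by_contra hc
          push_neg at hall
          obtain ⟨k, hk, hne⟩ := hall
          exact hne (hag k (by omega))
        set t := m - ℓ with ht
        have hm : m + 1 = (ℓ + 1) + t := by omega
        rw [hm, tv_split (ℓ+1) t γ b hγ]
        have hIH : tv t (shiftBase γ (ℓ+1)) (shiftSeq b (ℓ+1)) < 1 := by
          apply ih t (by omega) _ _ (shiftBase_gt γ hγ (ℓ+1))
          intro j
          rw [shiftSeq_add, shiftBase_add]
          exact hb (ℓ+1+j)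
        have hIH0 : 0 ≤ tv t (shiftBase γ (ℓ+1)) (shiftSeq b (ℓ+1)) :=
          tv_nonneg t _ _ (shiftBase_gt γ hγ (ℓ+1))
        have hA : tv (ℓ+1) γ b + 1 / (∏ i ∈ Finset.range (ℓ+1), γ i) ≤
            tv (ℓ+1) γ (quasiGreedy γ) := by
          have e1 := tv_split ℓ 1 γ b hγ
          have e2 := tv_split ℓ 1 γ (quasiGreedy γ) hγ
          rw [tv_one] at e1 e2
          have ec : tv ℓ γ b = tv ℓ γ (quasiGreedy γ) := tv_congr _ _ _ _ hag
          simp only [shiftSeq, shiftBase, Nat.add_zero] at e1 e2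
          rw [e1, e2, ec, Finset.prod_range_succ]
          have hdig : (b ℓ : ℝ) + 1 ≤ (quasiGreedy γ ℓ : ℝ) := by
            have : b ℓ + 1 ≤ quasiGreedy γ ℓ := hlt
            exact_mod_cast this
          have hPℓ : 0 < ∏ i ∈ Finset.range ℓ, γ i := hP ℓ
          have hγℓ : 0 < γ ℓ := lt_trans one_pos (hγ ℓ)
          have : (b ℓ : ℝ) / γ ℓ / (∏ i ∈ Finset.range ℓ, γ i)
              + 1 / ((∏ i ∈ Finset.range ℓ, γ i) * γ ℓ)
              ≤ (quasiGreedy γ ℓ : ℝ) / γ ℓ / (∏ i ∈ Finset.range ℓ, γ i) := by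
            rw [div_div, div_div, mul_comm (∏ i ∈ Finset.range ℓ, γ i) (γ ℓ), ← add_div]
            gcongr
          linarith
        have hq1 : tv (ℓ+1) γ (quasiGreedy γ) ≤ 1 := by
          rw [tv_quasi γ hγ ℓ]
          have h1 := (qRem_bounds γ hγ ℓ).1
          have h2 : 0 < qRem γ ℓ / ∏ i ∈ Finset.range (ℓ+1), γ i := div_pos h1 (hP (ℓ+1))
          linarith
        have hlast : tv t (shiftBase γ (ℓ+1)) (shiftSeq b (ℓ+1)) / (∏ i ∈ Finset.range (ℓ+1), γ i)
            < 1 / (∏ i ∈ Finset.range (ℓ+1), γ i) := by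
          gcongr
          exact hP (ℓ+1)
        linarith

lemma floor_add_nat_tv {T : ℝ} (b0 : ℕ) (h0 : 0 ≤ T) (h1 : T < 1) :
    ⌊(b0 : ℝ) + T⌋ = (b0 : ℤ) ∧ ((⌊(b0 : ℝ) + T⌋).toNat = b0) := by
  have : ⌊(b0 : ℝ) + T⌋ = b0 + ⌊T⌋ := by
    rw [add_comm, Int.floor_add_natCast]
    omega
  have hT : ⌊T⌋ = 0 := Int.floor_eq_zero_iff.2 ⟨h0, h1⟩
  constructor
  · omega
  · omega

/-- If all shifted truncated values are `< 1`, the greedy algorithm applied to `tv N γ b`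
reproduces the digits of `b` up to `N`. -/
lemma greedy_tv (γ : ℕ → ℝ) (hγ : ∀ n, 1 < γ n) (b : ℕ → ℕ)
    (h : ∀ j m, tv m (shiftBase γ j) (shiftSeq b j) < 1) (N : ℕ) :
    ∀ k, k < N → greedy γ (tv N γ b) k = b k ∧
      greedyRem γ (tv N γ b) k = tv (N - (k+1)) (shiftBase γ (k+1)) (shiftSeq b (k+1)) := by
  intro k
  induction k with
  | zero =>
      intro hk
      obtain ⟨N', rfl⟩ : ∃ N', N = N' + 1 := ⟨N - 1, by omega⟩
      set T := tv N' (shiftBase γ 1) (shiftSeq b 1) with hT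
      have hT0 : 0 ≤ T := tv_nonneg _ _ _ (shiftBase_gt γ hγ 1)
      have hT1 : T < 1 := h 1 N'
      have hγ0 : 0 < γ 0 := lt_trans one_pos (hγ 0)
      have hx : γ 0 * tv (N'+1) γ b = (b 0 : ℝ) + T := by
        show γ 0 * (((b 0 : ℝ) + T) / γ 0) = _
        field_simp
      have hfl := floor_add_nat_tv (b 0) hT0 hT1
      constructor
      · show (⌊γ 0 * tv (N'+1) γ b⌋).toNat = b 0
        rw [hx]; exact hfl.2
      · show γ 0 * tv (N'+1) γ b - ⌊γ 0 * tv (N'+1) γ b⌋ = _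
        rw [hx, hfl.1]
        simp [hT]
  | succ k ihk =>
      intro hk
      have ih := ihk (by omega)
      have hrec : N - (k+1) = (N - (k+2)) + 1 := by omega
      set T := tv (N - (k+2)) (shiftBase γ (k+2)) (shiftSeq b (k+2)) with hTdef
      have hT0 : 0 ≤ T := tv_nonneg _ _ _ (shiftBase_gt γ hγ (k+2))
      have hT1 : T < 1 := h (k+2) _
      have hγk : 0 < γ (k+1) := lt_trans one_pos (hγ (k+1))
      have hx : γ (k+1) * greedyRem γ (tv N γ b) k = (b (k+1) : ℝ) + T := by
        rw [ih.2, hrec]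
        show γ (k+1) * ((↑(shiftSeq b (k+1) 0) +
          tv (N - (k+2)) (shiftBase (shiftBase γ (k+1)) 1) (shiftSeq (shiftSeq b (k+1)) 1))
            / shiftBase γ (k+1) 0) = _
        rw [shiftBase_add, shiftSeq_add]
        have e1 : shiftSeq b (k+1) 0 = b (k+1) := by simp [shiftSeq]
        have e2 : shiftBase γ (k+1) 0 = γ (k+1) := by simp [shiftBase]
        rw [e1, e2]
        field_simp
        rfl
      have hfl := floor_add_nat_tv (b (k+1)) hT0 hT1
      constructor
      · show (⌊γ (k+1) * greedyRem γ (tv N γ b) k⌋).toNat = b (k+1)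
        rw [hx]; exact hfl.2
      · show γ (k+1) * greedyRem γ (tv N γ b) k - ⌊γ (k+1) * greedyRem γ (tv N γ b) k⌋ = _
        rw [hx, hfl.1]
        push_cast
        ring

lemma greedyRem_mem (γ : ℕ → ℝ) (x : ℝ) (n : ℕ) :
    0 ≤ greedyRem γ x n ∧ greedyRem γ x n < 1 := by
  cases n with
  | zero =>
      simp only [greedyRem]
      constructor
      · linarith [Int.floor_le (γ 0 * x)]
      · linarith [Int.lt_floor_add_one (γ 0 * x)]
  | succ n =>
      simp only [greedyRem]
      constructor
      · linarith [Int.floor_le (γ (n+1) * greedyRem γ x n)]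
      · linarith [Int.lt_floor_add_one (γ (n+1) * greedyRem γ x n)]

lemma floor_ceil_digit {u v : ℝ} (hu : 0 ≤ u) (huv : u < v) :
    (⌊u⌋.toNat ≤ (⌈v⌉ - 1).toNat) ∧
      (⌊u⌋.toNat = (⌈v⌉ - 1).toNat → u - (⌊u⌋ : ℝ) < v - ((⌈v⌉ : ℝ) - 1)) := by
  have hv : 0 < v := lt_of_le_of_lt hu huv
  have h1 : (1:ℤ) ≤ ⌈v⌉ := Int.one_le_ceil_iff.2 hv
  have hfl : (0:ℤ) ≤ ⌊u⌋ := Int.floor_nonneg.2 hu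
  have hlt : ⌊u⌋ < ⌈v⌉ := by
    have : (⌊u⌋ : ℝ) < (⌈v⌉ : ℝ) :=
      lt_of_le_of_lt (Int.floor_le u) (lt_of_lt_of_le huv (Int.le_ceil v))
    exact_mod_cast this
  constructor
  · omega
  · intro heq
    have hZ : ⌊u⌋ = ⌈v⌉ - 1 := by omega
    have hR : (⌊u⌋ : ℝ) = (⌈v⌉ : ℝ) - 1 := by exact_mod_cast hZ
    linarith

/-- Digitwise comparison of greedy expansion of `y ∈ [0,1)` with quasi-greedy of 1. -/
lemma greedy_le_quasi_aux (γ : ℕ → ℝ) (hγ : ∀ n, 1 < γ n) (y : ℝ)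
    (hy0 : 0 ≤ y) (hy1 : y < 1) : ∀ n, (∀ k, k < n → greedy γ y k = quasiGreedy γ k) →
    greedy γ y n ≤ quasiGreedy γ n ∧
      (greedy γ y n = quasiGreedy γ n → greedyRem γ y n < qRem γ n) := by
  intro n
  induction n with
  | zero =>
      intro _
      have hγ0 : 0 < γ 0 := lt_trans one_pos (hγ 0)
      have hu : 0 ≤ γ 0 * y := mul_nonneg (le_of_lt hγ0) hy0
      have huv : γ 0 * y < γ 0 := by nlinarith
      have key := floor_ceil_digit hu huv
      exact ⟨key.1, fun he => key.2 he⟩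
  | succ n ihn =>
      intro hall
      have ih := ihn (fun k hk => hall k (by omega))
      have hrem : greedyRem γ y n < qRem γ n := ih.2 (hall n (by omega))
      have hγn : 0 < γ (n+1) := lt_trans one_pos (hγ (n+1))
      have hu : 0 ≤ γ (n+1) * greedyRem γ y n :=
        mul_nonneg (le_of_lt hγn) (greedyRem_mem γ y n).1
      have huv : γ (n+1) * greedyRem γ y n < γ (n+1) * qRem γ n := by nlinarith
      have key := floor_ceil_digit hu huv
      exact ⟨key.1, fun he => key.2 he⟩

lemma greedy_le_quasi (γ : ℕ → ℝ) (hγ : ∀ n, 1 < γ n) (y : ℝ)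
    (hy0 : 0 ≤ y) (hy1 : y < 1) : LexLe (greedy γ y) (quasiGreedy γ) := by
  classical
  by_cases h : ∀ k, greedy γ y k = quasiGreedy γ k
  · exact Or.inr (funext h)
  · push_neg at h
    left
    refine ⟨Nat.find h, fun k hk => by_contra fun hc => Nat.find_min h hk hc, ?_⟩
    have hag : ∀ k, k < Nat.find h → greedy γ y k = quasiGreedy γ k :=
      fun k hk => by_contra fun hc => Nat.find_min h hk hc
    exact lt_of_le_of_ne (greedy_le_quasi_aux γ hγ y hy0 hy1 (Nat.find h) hag).1
      (Nat.find_spec h)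

/-- Shift compatibility of the greedy expansion. -/
lemma greedy_shift (γ : ℕ → ℝ) (x : ℝ) (n : ℕ) : ∀ k,
    greedyRem γ x (n+1+k) = greedyRem (shiftBase γ (n+1)) (greedyRem γ x n) k ∧
    greedy γ x (n+1+k) = greedy (shiftBase γ (n+1)) (greedyRem γ x n) k := by
  intro k
  induction k with
  | zero =>
      constructor
      · show greedyRem γ x (n+1) = _
        simp [greedyRem, shiftBase]
      · show greedy γ x (n+1) = _
        simp [greedy, greedyRem, shiftBase]
  | succ k ihk =>
      have e : n + 1 + (k + 1) = (n + 1 + k) + 1 := rfl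
      constructor
      · show greedyRem γ x ((n+1+k)+1) = _
        simp only [greedyRem, shiftBase]
        rw [← ihk.1]
        have : n + 1 + (k + 1) = n + 1 + k + 1 := rfl
        rw [this]
      · show greedy γ x ((n+1+k)+1) = _
        simp only [greedy, greedyRem, shiftBase]
        rw [← ihk.1]
        have : n + 1 + (k + 1) = n + 1 + k + 1 := rfl
        rw [this]

lemma condition_closed (β : ℕ → ℝ) :
    IsClosed {a : ℕ → ℕ | ∀ n, LexLe (shiftSeq a n) (quasiGreedy (shiftBase β n))} := by
  rw [← isOpen_compl_iff, isOpen_iff_mem_nhds]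
  intro a ha
  simp only [Set.mem_compl_iff, Set.mem_setOf_eq, not_forall] at ha
  obtain ⟨n, hn⟩ := ha
  obtain ⟨ℓ, hag, hlt⟩ := lexLt_of_not_lexLe hn
  have hV : (⋂ k ∈ Finset.range (n+ℓ+1), {a' : ℕ → ℕ | a' k = a k}) ∈ nhds a := by
    rw [Filter.biInter_finset_mem]
    intro k _
    have : IsOpen {a' : ℕ → ℕ | a' k = a k} := by
      have : {a' : ℕ → ℕ | a' k = a k} = (fun p : ℕ → ℕ => p k) ⁻¹' {a k} := rfl
      rw [this]
      exact (isOpen_discrete ({a k} : Set ℕ)).preimage (continuous_apply k)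
    exact IsOpen.mem_nhds this rfl
  apply Filter.mem_of_superset hV
  intro a' ha'
  simp only [Set.mem_iInter, Set.mem_setOf_eq, Finset.mem_range] at ha'
  simp only [Set.mem_compl_iff, Set.mem_setOf_eq, not_forall]
  refine ⟨n, not_lexLe_of_lexLt ⟨ℓ, ?_, ?_⟩⟩
  · intro k hk
    have e1 : shiftSeq a' n k = shiftSeq a n k := by
      simp only [shiftSeq]; exact ha' (n+k) (by omega)
    rw [e1]
    exact hag k hk
  · have e1 : shiftSeq a' n ℓ = shiftSeq a n ℓ := by
      simp only [shiftSeq]; exact ha' (n+ℓ) (by omega)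
    rw [e1]; exact hlt

theorem stmt_15 (β : ℕ → ℝ) (hβ : IsCantorBase β) (a : ℕ → ℕ) :
    a ∈ closure (Dset β) ↔
      ∀ n : ℕ, LexLe (shiftSeq a n) (quasiGreedy (shiftBase β n)) := by
  constructor
  · intro ha n
    have hsub : Dset β ⊆ {a : ℕ → ℕ | ∀ n, LexLe (shiftSeq a n) (quasiGreedy (shiftBase β n))} := by
      rintro s ⟨x, hx, rfl⟩
      intro m
      cases m with
      | zero =>
          rw [shiftSeq_zero, shiftBase_zero]
          exact greedy_le_quasi β hβ.1 x hx.1 hx.2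
      | succ m =>
          have e : shiftSeq (greedy β x) (m+1) = greedy (shiftBase β (m+1)) (greedyRem β x m) :=
            funext fun k => (greedy_shift β x m k).2
          rw [e]
          exact greedy_le_quasi _ (shiftBase_gt β hβ.1 (m+1)) _
            (greedyRem_mem β x m).1 (greedyRem_mem β x m).2
    exact closure_minimal hsub (condition_closed β) ha n
  · intro H
    have hcond : ∀ j m, tv m (shiftBase β j) (shiftSeq a j) < 1 := by
      intro j m
      apply tv_lt_one m _ _ (shiftBase_gt β hβ.1 j)
      intro i
      rw [shiftSeq_add, shiftBase_add]
      exact H (j + i)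
    have hmem : ∀ N : ℕ, greedy β (tv N β a) ∈ Dset β := by
      intro N
      refine ⟨tv N β a, ⟨tv_nonneg N β a hβ.1, ?_⟩, rfl⟩
      have := hcond 0 N
      rwa [shiftSeq_zero, shiftBase_zero] at this
    apply mem_closure_of_tendsto (f := fun N => greedy β (tv N β a)) (b := atTop)
      ?_ (Filter.Eventually.of_forall hmem)
    rw [tendsto_pi_nhds]
    intro k
    apply Filter.Tendsto.congr' ?_ (tendsto_const_nhds (x := a k))
    filter_upwards [eventually_ge_atTop (k+1)] with N hN
    exact ((greedy_tv β hβ.1 a hcond N k (by omega)).1).symm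
end

section
/- Let β be a Cantor real base and let S_β be the closure of D_β = {d_β(x) : x ∈ [0,1)} for the prefix distance. For a, b ∈ S_β: (1) if a <_lex b then val_β(a) ≤ val_β(b); (2) if val_β(a) < val_β(b) then a <_lex b. -/
open Filter

lemma cprod_pos {β : ℕ → ℝ} (hβ : ∀ n, 1 < β n) (n : ℕ) : 0 < cprod β n :=
  Finset.prod_pos fun i _ => lt_trans one_pos (hβ i)

lemma greedy_invariant {β : ℕ → ℝ} (hβ : ∀ n, 1 < β n) {x : ℝ} (hx : 0 ≤ x) (n : ℕ) :
    0 ≤ greedyRem β x n ∧ greedyRem β x n < 1 ∧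
      x = (∑ k ∈ Finset.range (n+1), (greedy β x k : ℝ) / cprod β k)
        + greedyRem β x n / cprod β n := by
  induction n with
  | zero =>
    have hb0 : 0 < β 0 := lt_trans one_pos (hβ 0)
    have hxx : 0 ≤ β 0 * x := mul_nonneg hb0.le hx
    have hfl : (0:ℤ) ≤ ⌊β 0 * x⌋ := Int.floor_nonneg.mpr hxx
    have hcast : ((greedy β x 0 : ℝ)) = (⌊β 0 * x⌋ : ℝ) := by
      show ((⌊β 0 * x⌋).toNat : ℝ) = _
      exact_mod_cast Int.toNat_of_nonneg hfl
    have hr0 : greedyRem β x 0 = Int.fract (β 0 * x) := rfl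
    refine ⟨by rw [hr0]; exact Int.fract_nonneg _, by rw [hr0]; exact Int.fract_lt_one _, ?_⟩
    have hc0 : cprod β 0 = β 0 := by simp [cprod]
    have key : (greedy β x 0 : ℝ) + greedyRem β x 0 = β 0 * x := by
      rw [hcast]; show (⌊β 0 * x⌋ : ℝ) + (β 0 * x - ⌊β 0 * x⌋) = β 0 * x; ring
    rw [Finset.sum_range_one, hc0, ← add_div, key,
      mul_div_cancel_left₀ _ (ne_of_gt hb0)]
  | succ n ih =>
    obtain ⟨hr0, hr1, hsum⟩ := ih
    have hb : 0 < β (n+1) := lt_trans one_pos (hβ (n+1))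
    have hxx : 0 ≤ β (n+1) * greedyRem β x n := mul_nonneg hb.le hr0
    have hfl : (0:ℤ) ≤ ⌊β (n+1) * greedyRem β x n⌋ := Int.floor_nonneg.mpr hxx
    have hcast : ((greedy β x (n+1) : ℝ)) = (⌊β (n+1) * greedyRem β x n⌋ : ℝ) := by
      show ((⌊β (n+1) * greedyRem β x n⌋).toNat : ℝ) = _
      exact_mod_cast Int.toNat_of_nonneg hfl
    have hr : greedyRem β x (n+1) = Int.fract (β (n+1) * greedyRem β x n) := rfl
    refine ⟨by rw [hr]; exact Int.fract_nonneg _, by rw [hr]; exact Int.fract_lt_one _, ?_⟩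
    have key : (greedy β x (n+1) : ℝ) + greedyRem β x (n+1) = β (n+1) * greedyRem β x n := by
      rw [hcast]
      show (⌊β (n+1) * greedyRem β x n⌋ : ℝ)
        + (β (n+1) * greedyRem β x n - ⌊β (n+1) * greedyRem β x n⌋) = _
      ring
    have hcs : cprod β (n+1) = cprod β n * β (n+1) := Finset.prod_range_succ β (n+1)
    have hcp : 0 < cprod β n := cprod_pos hβ n
    have hstep : greedyRem β x n / cprod β n
        = (greedy β x (n+1) : ℝ) / cprod β (n+1) + greedyRem β x (n+1) / cprod β (n+1) := by
      rw [← add_div, key, hcs, mul_comm (cprod β n) (β (n+1)),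
        mul_div_mul_left _ _ (ne_of_gt hb)]
    rw [Finset.sum_range_succ]
    linarith [hstep, hsum]

lemma dset_tail {β : ℕ → ℝ} (hβ : ∀ n, 1 < β n) {c : ℕ → ℕ} (hc : c ∈ Dset β) (ℓ N : ℕ) :
    ∑ n ∈ Finset.Ico (ℓ+1) (N+1), (c n : ℝ) / cprod β n ≤ 1 / cprod β ℓ := by
  obtain ⟨x, hx, rfl⟩ := hc
  have hcpℓ : 0 < cprod β ℓ := cprod_pos hβ ℓ
  rcases le_or_gt (ℓ+1) (N+1) with h | h
  · rw [Finset.sum_Ico_eq_sub _ h]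
    obtain ⟨hrN0, _, hsN⟩ := greedy_invariant hβ hx.1 N
    obtain ⟨_, hrℓ1, hsℓ⟩ := greedy_invariant hβ hx.1 ℓ
    have hcpN : 0 < cprod β N := cprod_pos hβ N
    have h1 : ∑ k ∈ Finset.range (N+1), (greedy β x k : ℝ) / cprod β k
        = x - greedyRem β x N / cprod β N := by linarith
    have h2 : ∑ k ∈ Finset.range (ℓ+1), (greedy β x k : ℝ) / cprod β k
        = x - greedyRem β x ℓ / cprod β ℓ := by linarith
    rw [h1, h2]
    have t1 : 0 ≤ greedyRem β x N / cprod β N := div_nonneg hrN0 hcpN.le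
    have t2 : greedyRem β x ℓ / cprod β ℓ ≤ 1 / cprod β ℓ := by gcongr
    linarith
  · rw [Finset.Ico_eq_empty (by omega), Finset.sum_empty]
    exact le_of_lt (div_pos one_pos hcpℓ)

lemma closure_agree {β : ℕ → ℝ} {a : ℕ → ℕ} (haS : a ∈ closure (Dset β)) (N : ℕ) :
    ∃ c ∈ Dset β, ∀ k < N, c k = a k := by
  have hopen : IsOpen {c : ℕ → ℕ | ∀ k < N, c k = a k} := by
    have : {c : ℕ → ℕ | ∀ k < N, c k = a k}
        = Set.pi {k | k < N} (fun k => {a k}) := by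
      ext c
      simp only [Set.mem_setOf_eq, Set.mem_pi, Set.mem_singleton_iff]
    rw [this]
    exact isOpen_set_pi (Set.finite_lt_nat N) (fun k _ => isOpen_discrete _)
  have hmem : a ∈ {c : ℕ → ℕ | ∀ k < N, c k = a k} := fun k _ => rfl
  obtain ⟨c, hc1, hc2⟩ := mem_closure_iff_nhds.mp haS _ (hopen.mem_nhds hmem)
  exact ⟨c, hc2, hc1⟩

lemma closure_tail_partial {β : ℕ → ℝ} (hβ : ∀ n, 1 < β n) {a : ℕ → ℕ}
    (haS : a ∈ closure (Dset β)) (ℓ N : ℕ) :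
    ∑ n ∈ Finset.Ico (ℓ+1) (N+1), (a n : ℝ) / cprod β n ≤ 1 / cprod β ℓ := by
  obtain ⟨c, hc, hag⟩ := closure_agree haS (N+1)
  calc ∑ n ∈ Finset.Ico (ℓ+1) (N+1), (a n : ℝ) / cprod β n
      = ∑ n ∈ Finset.Ico (ℓ+1) (N+1), (c n : ℝ) / cprod β n := by
        refine Finset.sum_congr rfl fun n hn => ?_
        rw [hag n (Finset.mem_Ico.mp hn).2]
    _ ≤ 1 / cprod β ℓ := dset_tail hβ hc ℓ N

lemma closure_summable {β : ℕ → ℝ} (hβ : ∀ n, 1 < β n) {a : ℕ → ℕ}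
    (haS : a ∈ closure (Dset β)) : Summable (fun n => (a n : ℝ) / cprod β n) := by
  apply summable_of_sum_range_le (c := (a 0 : ℝ) / cprod β 0 + 1 / cprod β 0)
  · intro n; exact div_nonneg (Nat.cast_nonneg _) (cprod_pos hβ n).le
  · intro n
    have h0 : (0:ℝ) ≤ (a 0 : ℝ) / cprod β 0 :=
      div_nonneg (Nat.cast_nonneg _) (cprod_pos hβ 0).le
    have h1 : (0:ℝ) < 1 / cprod β 0 := div_pos one_pos (cprod_pos hβ 0)
    rcases Nat.eq_zero_or_pos n with rfl | hn
    · simp only [Finset.range_zero, Finset.sum_empty]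
      linarith
    · obtain ⟨m, rfl⟩ := Nat.exists_eq_add_of_le hn
      rw [add_comm 1 m, Finset.sum_range_succ']
      have heq : ∑ i ∈ Finset.range m, (a (i+1) : ℝ) / cprod β (i+1)
          = ∑ k ∈ Finset.Ico 1 (m+1), (a k : ℝ) / cprod β k := by
        rw [Finset.sum_Ico_eq_sum_range]
        simp [add_comm]
      rw [heq]
      have := closure_tail_partial hβ haS 0 m
      linarith

lemma closure_tail_tsum {β : ℕ → ℝ} (hβ : ∀ n, 1 < β n) {a : ℕ → ℕ}
    (haS : a ∈ closure (Dset β)) (ℓ : ℕ) :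
    ∑' n, (a (n + (ℓ+1)) : ℝ) / cprod β (n + (ℓ+1)) ≤ 1 / cprod β ℓ := by
  have hsum : Summable (fun n => (a (n + (ℓ+1)) : ℝ) / cprod β (n + (ℓ+1))) :=
    ((summable_nat_add_iff (f := fun n => (a n : ℝ) / cprod β n) (ℓ+1)).mpr (closure_summable hβ haS))
  refine Summable.tsum_le_of_sum_le hsum fun s => ?_
  obtain ⟨N, hN⟩ := s.exists_nat_subset_range
  calc ∑ n ∈ s, (a (n + (ℓ+1)) : ℝ) / cprod β (n + (ℓ+1))
      ≤ ∑ n ∈ Finset.range N, (a (n + (ℓ+1)) : ℝ) / cprod β (n + (ℓ+1)) := by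
        refine Finset.sum_le_sum_of_subset_of_nonneg hN fun n _ _ => ?_
        exact div_nonneg (Nat.cast_nonneg _) (cprod_pos hβ _).le
    _ = ∑ k ∈ Finset.Ico (ℓ+1) (N + ℓ + 1), (a k : ℝ) / cprod β k := by
        rw [Finset.sum_Ico_eq_sum_range]
        have : N + ℓ + 1 - (ℓ+1) = N := by omega
        rw [this]
        refine Finset.sum_congr rfl fun k _ => ?_
        rw [add_comm (ℓ+1) k]
    _ ≤ 1 / cprod β ℓ := by
        have := closure_tail_partial hβ haS ℓ (N + ℓ)
        simpa using this

lemma lex_val {β : ℕ → ℝ} (hβ : ∀ n, 1 < β n) {a b : ℕ → ℕ}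
    (haS : a ∈ closure (Dset β)) (hbS : b ∈ closure (Dset β))
    (hab : LexLt a b) : valN β a ≤ valN β b := by
  obtain ⟨ℓ, hpre, hlt⟩ := hab
  have hsa := closure_summable hβ haS
  have hsb := closure_summable hβ hbS
  have hva : valN β a = (∑ k ∈ Finset.range (ℓ+1), (a k : ℝ) / cprod β k)
      + ∑' n, (a (n + (ℓ+1)) : ℝ) / cprod β (n + (ℓ+1)) :=
    (Summable.sum_add_tsum_nat_add (ℓ+1) hsa).symm
  have hvb : valN β b = (∑ k ∈ Finset.range (ℓ+1), (b k : ℝ) / cprod β k)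
      + ∑' n, (b (n + (ℓ+1)) : ℝ) / cprod β (n + (ℓ+1)) :=
    (Summable.sum_add_tsum_nat_add (ℓ+1) hsb).symm
  have hcpℓ : 0 < cprod β ℓ := cprod_pos hβ ℓ
  have hpresum : ∑ k ∈ Finset.range ℓ, (a k : ℝ) / cprod β k
      = ∑ k ∈ Finset.range ℓ, (b k : ℝ) / cprod β k :=
    Finset.sum_congr rfl fun k hk => by rw [hpre k (Finset.mem_range.mp hk)]
  have hdig : (a ℓ : ℝ) + 1 ≤ (b ℓ : ℝ) := by exact_mod_cast Nat.succ_le_of_lt hlt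
  have hstep : (a ℓ : ℝ) / cprod β ℓ + 1 / cprod β ℓ ≤ (b ℓ : ℝ) / cprod β ℓ := by
    rw [← add_div]; gcongr
  have hta := closure_tail_tsum hβ haS ℓ
  have htb : (0:ℝ) ≤ ∑' n, (b (n + (ℓ+1)) : ℝ) / cprod β (n + (ℓ+1)) :=
    tsum_nonneg fun n => div_nonneg (Nat.cast_nonneg _) (cprod_pos hβ _).le
  rw [hva, hvb, Finset.sum_range_succ, Finset.sum_range_succ, hpresum]
  linarith

lemma lex_trichotomy (a b : ℕ → ℕ) : LexLt a b ∨ a = b ∨ LexLt b a := by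
  by_cases h : a = b
  · exact Or.inr (Or.inl h)
  · have hex : ∃ k, a k ≠ b k := by
      by_contra hc
      push_neg at hc
      exact h (funext hc)
    have hspec := Nat.find_spec hex
    have hmin : ∀ k < Nat.find hex, a k = b k := fun k hk =>
      not_not.mp (Nat.find_min hex hk)
    rcases lt_or_gt_of_ne hspec with h1 | h1
    · exact Or.inl ⟨Nat.find hex, hmin, h1⟩
    · exact Or.inr (Or.inr ⟨Nat.find hex, fun k hk => (hmin k hk).symm, h1⟩)

theorem stmt_16 (β : ℕ → ℝ) (hβ : IsCantorBase β) (a b : ℕ → ℕ)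
    (haS : a ∈ closure (Dset β)) (hbS : b ∈ closure (Dset β)) :
    (LexLt a b → valN β a ≤ valN β b) ∧ (valN β a < valN β b → LexLt a b) := by
  refine ⟨lex_val hβ.1 haS hbS, fun hv => ?_⟩
  rcases lex_trichotomy a b with h | h | h
  · exact h
  · subst h; exact absurd hv (lt_irrefl _)
  · exact absurd (lex_val hβ.1 hbS haS h) (not_le.mpr hv)
end

section
/- Let β = (β_0, …, β_{p−1}) repeated periodically be an alternate base (a periodic Cantor real base of period p ≥ 1). Then the greedy β-expansion of 1 is not purely periodic: there is no q ≥ 1 such that ε_n = ε_{n+q} for all n ∈ ℕ, where (ε_n) = d_β(1). -/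
open Filter

theorem stmt_18 (β : ℕ → ℝ) (hβ : IsCantorBase β) (p : ℕ) (hp : 1 ≤ p)
    (hper : ∀ n, β (n + p) = β n) :
    ¬ ∃ q : ℕ, 1 ≤ q ∧ ∀ n, greedy β 1 n = greedy β 1 (n + q) := by
  rintro ⟨q, hq, hgq⟩
  have hb := hβ.1
  set r := greedyRem β 1 with hr
  -- remainders lie in [0,1)
  have hmem : ∀ n, 0 ≤ r n ∧ r n < 1 := by
    intro n
    cases n with
    | zero =>
      have : r 0 = Int.fract (β 0 * 1) := by rw [Int.fract]; rfl
      rw [this]; exact ⟨Int.fract_nonneg _, Int.fract_lt_one _⟩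
    | succ n =>
      have : r (n+1) = Int.fract (β (n+1) * r n) := by rw [Int.fract]; rfl
      rw [this]; exact ⟨Int.fract_nonneg _, Int.fract_lt_one _⟩
  have hfl : ∀ n (y : ℝ), 0 ≤ y → (0:ℤ) ≤ ⌊β n * y⌋ := by
    intro n y hy
    exact Int.le_floor.mpr (by push_cast; exact mul_nonneg (le_of_lt (lt_trans zero_lt_one (hb n))) hy)
  set Q := q * p with hQdef
  have hQ1 : 1 ≤ Q := Nat.one_le_iff_ne_zero.mpr (Nat.mul_ne_zero (by omega) (by omega))
  -- β is periodic with period Q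
  have hβmul : ∀ m n, β (n + m * p) = β n := by
    intro m
    induction m with
    | zero => simp
    | succ k ih =>
      intro n
      have : n + (k + 1) * p = (n + k * p) + p := by ring
      rw [this, hper, ih]
  have hβQ : ∀ n, β (n + Q) = β n := fun n => hβmul q n
  -- digits are periodic with period Q
  have hεmul : ∀ m n, greedy β 1 (n + m * q) = greedy β 1 n := by
    intro m
    induction m with
    | zero => simp
    | succ k ih =>
      intro n
      have e : n + (k + 1) * q = (n + k * q) + q := by ring
      rw [e, ← hgq (n + k * q), ih n]
  have hεQ : ∀ n, greedy β 1 (n + Q) = greedy β 1 n := by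
    intro n
    have e : n + Q = n + p * q := by rw [hQdef]; ring
    rw [e, hεmul p n]
  -- the floors of the greedy recursion agree at distance Q
  have hfloor : ∀ n, ⌊β (n+1) * r (n + Q)⌋ = ⌊β (n+1) * r n⌋ := by
    intro n
    have h1 : greedy β 1 (n + 1 + Q) = greedy β 1 (n + 1) := hεQ (n+1)
    have e1 : n + 1 + Q = (n + Q) + 1 := by ring
    have h2 : greedy β 1 ((n + Q) + 1) = (⌊β ((n + Q) + 1) * r (n + Q)⌋).toNat := rfl
    have h3 : greedy β 1 (n + 1) = (⌊β (n + 1) * r n⌋).toNat := rfl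
    have e2 : β ((n + Q) + 1) = β (n + 1) := by
      have : (n + Q) + 1 = (n + 1) + Q := by ring
      rw [this, hβQ]
    rw [e1, h2, e2, h3] at h1
    have n1 : (0:ℤ) ≤ ⌊β (n+1) * r (n + Q)⌋ := hfl _ _ (hmem _).1
    have n2 : (0:ℤ) ≤ ⌊β (n+1) * r n⌋ := hfl _ _ (hmem _).1
    omega
  -- key identity: the gap between remainders grows like cprod
  have key : ∀ n, r n - r (n + Q) = cprod β n * (1 - r (Q - 1)) := by
    intro n
    induction n with
    | zero =>
      have e0 : r 0 = β 0 * 1 - ⌊β 0 * 1⌋ := rfl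
      have eQ : Q = (Q - 1) + 1 := by omega
      have eQ' : r ((Q - 1) + 1)
          = β ((Q - 1) + 1) * r (Q - 1) - ⌊β ((Q - 1) + 1) * r (Q - 1)⌋ := rfl
      have eβ : β ((Q - 1) + 1) = β 0 := by
        have : (Q - 1) + 1 = 0 + Q := by omega
        rw [this, hβQ]
      -- floors agree at step 0
      have hd : greedy β 1 ((Q-1)+1) = greedy β 1 0 := by
        have : (Q - 1) + 1 = 0 + Q := by omega
        rw [this, hεQ]
      have h2 : greedy β 1 ((Q-1) + 1) = (⌊β ((Q-1) + 1) * r (Q-1)⌋).toNat := rfl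
      have h3 : greedy β 1 0 = (⌊β 0 * 1⌋).toNat := by simp [greedy]
      rw [h2, h3, eβ] at hd
      have n1 : (0:ℤ) ≤ ⌊β 0 * r (Q-1)⌋ := hfl _ _ (hmem _).1
      have n2 : (0:ℤ) ≤ ⌊β 0 * (1:ℝ)⌋ := hfl _ _ (by norm_num)
      have hfeq : ⌊β 0 * r (Q-1)⌋ = ⌊β 0 * (1:ℝ)⌋ := by omega
      have : r (0 + Q) = β 0 * r (Q - 1) - ⌊β 0 * (1:ℝ)⌋ := by
        rw [show (0:ℕ) + Q = (Q-1)+1 by omega, eQ', eβ, hfeq]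
      rw [this, e0]
      have hc0 : cprod β 0 = β 0 := by simp [cprod]
      rw [hc0]; ring
    | succ n ih =>
      have e1 : r (n + 1) = β (n+1) * r n - ⌊β (n+1) * r n⌋ := rfl
      have e2 : r ((n + Q) + 1)
          = β ((n+Q)+1) * r (n+Q) - ⌊β ((n+Q)+1) * r (n+Q)⌋ := rfl
      have eβ : β ((n+Q)+1) = β (n+1) := by
        have : (n + Q) + 1 = (n + 1) + Q := by ring
        rw [this, hβQ]
      have e3 : r (n + 1 + Q) = β (n+1) * r (n+Q) - ⌊β (n+1) * r (n+Q)⌋ := by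
        rw [show n + 1 + Q = (n+Q)+1 by ring, e2, eβ]
      rw [e1, e3, hfloor n]
      have hc : cprod β (n+1) = cprod β n * β (n+1) := by
        simp [cprod, Finset.prod_range_succ]
      rw [hc]
      linear_combination (β (n+1)) * ih
  -- contradiction: the gap is bounded by 1 but cprod → ∞
  have hc : 0 < 1 - r (Q - 1) := by linarith [(hmem (Q-1)).2]
  obtain ⟨N, hN⟩ := (Filter.tendsto_atTop.mp hβ.2 (2 / (1 - r (Q - 1)))).exists
  have h1 : r N - r (N + Q) < 1 := by
    have := (hmem N).2
    have := (hmem (N + Q)).1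
    linarith
  have h2 : cprod β N * (1 - r (Q - 1)) ≥ 2 := by
    rw [ge_iff_le, ← div_le_iff₀ hc] at *
    exact hN
  rw [key N] at h1
  linarith
end

section
/- Let β be an alternate base of period p and a a β-representation of 1. Then a is the greedy β-expansion of 1 if and only if σ^{pm}(a) <_lex a for all m ≥ 1, and σ^{pm+i}(a) <_lex d*_{β^{(i)}}(1) for all m ∈ ℕ and all i ∈ {1, …, p−1}. -/
open Filter

namespace St19
open Finset

lemma cprod_pos {β : ℕ → ℝ} (h : ∀ n, 0 < β n) (n : ℕ) : 0 < cprod β n :=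
  Finset.prod_pos fun i _ => h i

lemma cprod_succ (β : ℕ → ℝ) (n : ℕ) : cprod β (n+1) = cprod β n * β (n+1) :=
  Finset.prod_range_succ _ _

lemma cprod_zero (β : ℕ → ℝ) : cprod β 0 = β 0 := by simp [cprod]

lemma shiftBase_add (β : ℕ → ℝ) (n m : ℕ) :
    shiftBase (shiftBase β n) m = shiftBase β (n + m) := by
  funext k; simp [shiftBase, Nat.add_assoc]

lemma shiftSeq_add (a : ℕ → ℕ) (n m : ℕ) :
    shiftSeq (shiftSeq a n) m = shiftSeq a (n + m) := by
  funext k; simp [shiftSeq, Nat.add_assoc]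

lemma shiftBase_zero (β : ℕ → ℝ) : shiftBase β 0 = β := by
  funext k; simp [shiftBase]

lemma cprod_shift {β : ℕ → ℝ} (n : ℕ) : ∀ k,
    cprod β n * cprod (shiftBase β (n+1)) k = cprod β (n+1+k) := by
  intro k
  induction k with
  | zero => simp [cprod_zero, shiftBase, cprod_succ]
  | succ k ih =>
      have h1 : n+1+(k+1) = (n+1+k)+1 := by omega
      rw [h1, cprod_succ, cprod_succ, ← mul_assoc, ih]
      rfl

lemma mul_div_mul_cancel₀' {x y z : ℝ} (hy : y ≠ 0) : y * (x / (y * z)) = x / z := by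
  rcases eq_or_ne z 0 with hz | hz
  · simp [hz]
  · field_simp

lemma valN_def (β : ℕ → ℝ) (b : ℕ → ℕ) : valN β b = ∑' n, (b n : ℝ) / cprod β n := rfl

lemma valN_nonneg {β : ℕ → ℝ} (h : ∀ n, 0 < β n) (b : ℕ → ℕ) : 0 ≤ valN β b :=
  tsum_nonneg fun n => div_nonneg (Nat.cast_nonneg _) (cprod_pos h n).le

lemma summable_shift {δ : ℕ → ℝ} (hpos : ∀ n, 0 < δ n) {b : ℕ → ℕ}
    (hb : Summable fun n => (b n : ℝ) / cprod δ n) (n : ℕ) :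
    Summable fun k => ((shiftSeq b (n+1)) k : ℝ) / cprod (shiftBase δ (n+1)) k := by
  have h1 : Summable fun k => (b (k+(n+1)) : ℝ) / cprod δ (k+(n+1)) :=
    (summable_nat_add_iff (f := fun n => (b n : ℝ) / cprod δ n) (n+1)).2 hb
  have h2 := h1.mul_left (cprod δ n)
  refine h2.congr fun k => ?_
  have hc : cprod δ (n+1+k) = cprod δ n * cprod (shiftBase δ (n+1)) k := (cprod_shift n k).symm
  have hk : k + (n+1) = n+1+k := by omega
  have h0 : cprod δ n ≠ 0 := (cprod_pos hpos n).ne'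
  rw [hk, hc, mul_div_mul_cancel₀' h0]
  rfl

lemma val_split {δ : ℕ → ℝ} (hpos : ∀ n, 0 < δ n) {b : ℕ → ℕ}
    (hb : Summable fun n => (b n : ℝ) / cprod δ n) (n : ℕ) :
    valN δ b = (∑ k ∈ range (n+1), (b k : ℝ) / cprod δ k)
      + valN (shiftBase δ (n+1)) (shiftSeq b (n+1)) / cprod δ n := by
  have h := Summable.sum_add_tsum_nat_add (f := fun n => (b n : ℝ) / cprod δ n) (n+1) hb
  have h0 : cprod δ n ≠ 0 := (cprod_pos hpos n).ne'
  have htail : valN (shiftBase δ (n+1)) (shiftSeq b (n+1))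
      = cprod δ n * ∑' k, (b (k+(n+1)) : ℝ) / cprod δ (k+(n+1)) := by
    rw [valN_def, ← tsum_mul_left]
    refine tsum_congr fun k => ?_
    have hc : cprod δ (n+1+k) = cprod δ n * cprod (shiftBase δ (n+1)) k := (cprod_shift n k).symm
    have hk : k + (n+1) = n+1+k := by omega
    rw [hk, hc, mul_div_mul_cancel₀' h0]
    rfl
  rw [htail, mul_div_cancel_left₀ _ h0, valN_def]
  simpa using h.symm

lemma partial_le_val {δ : ℕ → ℝ} (hpos : ∀ n, 0 < δ n) {b : ℕ → ℕ}
    (hb : Summable fun n => (b n : ℝ) / cprod δ n) (N : ℕ) :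
    ∑ k ∈ range N, (b k : ℝ) / cprod δ k ≤ valN δ b :=
  Summable.sum_le_tsum _ (fun i _ => div_nonneg (Nat.cast_nonneg _) (cprod_pos hpos i).le) hb

lemma lex_trichotomy (b c : ℕ → ℕ) : LexLt b c ∨ b = c ∨ LexLt c b := by
  by_cases h : b = c
  · exact Or.inr (Or.inl h)
  · have h' : ∃ k, b k ≠ c k := by
      by_contra hc
      push_neg at hc
      exact h (funext hc)
    classical
    let ℓ := Nat.find h'
    have hpre : ∀ k, k < ℓ → b k = c k := fun k hk => by
      have := Nat.find_min h' hk
      simpa using this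
    have hne : b ℓ ≠ c ℓ := Nat.find_spec h'
    rcases lt_or_gt_of_ne hne with hlt | hgt
    · exact Or.inl ⟨ℓ, hpre, hlt⟩
    · exact Or.inr (Or.inr ⟨ℓ, fun k hk => (hpre k hk).symm, hgt⟩)

end St19
namespace St19
open Finset

section Quasi
variable {γ : ℕ → ℝ}

lemma qRem_bounds (hγ : ∀ n, 1 < γ n) : ∀ n, 0 < qRem γ n ∧ qRem γ n ≤ 1 := by
  intro n
  induction n with
  | zero =>
      have h1 := Int.ceil_lt_add_one (γ 0)
      have h2 := Int.le_ceil (γ 0)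
      constructor <;> [skip; skip] <;> simp only [qRem] <;> push_cast <;> linarith
  | succ n ih =>
      have hy : 0 < γ (n+1) * qRem γ n := mul_pos (lt_trans one_pos (hγ (n+1))) ih.1
      have h1 := Int.ceil_lt_add_one (γ (n+1) * qRem γ n)
      have h2 := Int.le_ceil (γ (n+1) * qRem γ n)
      constructor <;> simp only [qRem] <;> push_cast <;> linarith

lemma qRem_zero_def : qRem γ 0 = γ 0 - (⌈γ 0⌉ - 1) := rfl

lemma qRem_succ_def (n : ℕ) :
    qRem γ (n+1) = γ (n+1) * qRem γ n - (⌈γ (n+1) * qRem γ n⌉ - 1) := rfl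

lemma quasiGreedy_zero_cast (hγ : ∀ n, 1 < γ n) :
    (quasiGreedy γ 0 : ℝ) = γ 0 - qRem γ 0 := by
  have h0 : (0:ℝ) < γ 0 := lt_trans one_pos (hγ 0)
  have h1 : (1:ℤ) ≤ ⌈γ 0⌉ := Int.ceil_pos.mpr h0
  have h2 : ((⌈γ 0⌉ - 1).toNat : ℤ) = ⌈γ 0⌉ - 1 := Int.toNat_of_nonneg (by omega)
  have h3 : ((⌈γ 0⌉ - 1).toNat : ℝ) = (⌈γ 0⌉ : ℝ) - 1 := by exact_mod_cast congrArg (Int.cast : ℤ → ℝ) h2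
  simp only [quasiGreedy, qRem_zero_def]
  rw [h3]; ring

lemma quasiGreedy_succ_cast (hγ : ∀ n, 1 < γ n) (n : ℕ) :
    (quasiGreedy γ (n+1) : ℝ) = γ (n+1) * qRem γ n - qRem γ (n+1) := by
  have hy : 0 < γ (n+1) * qRem γ n :=
    mul_pos (lt_trans one_pos (hγ (n+1))) (qRem_bounds hγ n).1
  have h1 : (1:ℤ) ≤ ⌈γ (n+1) * qRem γ n⌉ := Int.ceil_pos.mpr hy
  have h2 : ((⌈γ (n+1) * qRem γ n⌉ - 1).toNat : ℤ) = ⌈γ (n+1) * qRem γ n⌉ - 1 :=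
    Int.toNat_of_nonneg (by omega)
  have h3 : ((⌈γ (n+1) * qRem γ n⌉ - 1).toNat : ℝ) = (⌈γ (n+1) * qRem γ n⌉ : ℝ) - 1 := by
    exact_mod_cast congrArg (Int.cast : ℤ → ℝ) h2
  simp only [quasiGreedy, qRem_succ_def]
  rw [h3]; ring

lemma qpartial (hγ : ∀ n, 1 < γ n) : ∀ N,
    ∑ k ∈ range (N+1), (quasiGreedy γ k : ℝ) / cprod γ k = 1 - qRem γ N / cprod γ N := by
  intro N
  induction N with
  | zero =>
      rw [range_one, sum_singleton, quasiGreedy_zero_cast hγ, cprod_zero]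
      have h0 : γ 0 ≠ 0 := (lt_trans one_pos (hγ 0)).ne'
      field_simp
  | succ N ih =>
      rw [sum_range_succ, ih, quasiGreedy_succ_cast hγ, cprod_succ]
      have hP : cprod γ N ≠ 0 := (cprod_pos (fun n => lt_trans one_pos (hγ n)) N).ne'
      have hb : γ (N+1) ≠ 0 := (lt_trans one_pos (hγ (N+1))).ne'
      field_simp
      ring

lemma qpartial_le (hγ : ∀ n, 1 < γ n) (N : ℕ) :
    ∑ k ∈ range N, (quasiGreedy γ k : ℝ) / cprod γ k ≤ 1 := by
  cases N with
  | zero => simp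
  | succ N =>
      rw [qpartial hγ N]
      have h1 : 0 ≤ qRem γ N / cprod γ N :=
        div_nonneg (qRem_bounds hγ N).1.le (cprod_pos (fun n => lt_trans one_pos (hγ n)) N).le
      linarith

lemma qsummable (hγ : ∀ n, 1 < γ n) :
    Summable fun n => (quasiGreedy γ n : ℝ) / cprod γ n :=
  summable_of_sum_range_le
    (fun n => div_nonneg (Nat.cast_nonneg _) (cprod_pos (fun m => lt_trans one_pos (hγ m)) n).le)
    (qpartial_le hγ)

lemma qval (hγ : ∀ n, 1 < γ n) (htend : Filter.Tendsto (cprod γ) Filter.atTop Filter.atTop) :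
    valN γ (quasiGreedy γ) = 1 := by
  have hs := qsummable hγ
  have h1 : Filter.Tendsto (fun N => ∑ k ∈ range N, (quasiGreedy γ k : ℝ) / cprod γ k)
      Filter.atTop (nhds (valN γ (quasiGreedy γ))) := hs.hasSum.tendsto_sum_nat
  have h2 : Filter.Tendsto (fun N => ∑ k ∈ range (N+1), (quasiGreedy γ k : ℝ) / cprod γ k)
      Filter.atTop (nhds (valN γ (quasiGreedy γ))) :=
    h1.comp (Filter.tendsto_add_atTop_nat 1)
  have h3 : Filter.Tendsto (fun N => qRem γ N / cprod γ N) Filter.atTop (nhds 0) := by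
    have hb : ∀ N, qRem γ N / cprod γ N ≤ (cprod γ)⁻¹ N := by
      intro N
      have hP : 0 < cprod γ N := cprod_pos (fun n => lt_trans one_pos (hγ n)) N
      calc qRem γ N / cprod γ N ≤ 1 / cprod γ N := by
            gcongr
            exact (qRem_bounds hγ N).2
        _ = (cprod γ)⁻¹ N := one_div _
    have h0 : ∀ N, 0 ≤ qRem γ N / cprod γ N := fun N =>
      div_nonneg (qRem_bounds hγ N).1.le (cprod_pos (fun n => lt_trans one_pos (hγ n)) N).le
    exact squeeze_zero h0 hb htend.inv_tendsto_atTop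
  have h4 : Filter.Tendsto (fun N => 1 - qRem γ N / cprod γ N) Filter.atTop (nhds 1) := by
    simpa using (tendsto_const_nhds (x := (1:ℝ)) (f := Filter.atTop)).sub h3
  have h5 : Filter.Tendsto (fun N => ∑ k ∈ range (N+1), (quasiGreedy γ k : ℝ) / cprod γ k)
      Filter.atTop (nhds 1) := by
    refine h4.congr fun N => ?_
    exact (qpartial hγ N).symm
  exact tendsto_nhds_unique h2 h5

lemma qtail (hγ : ∀ n, 1 < γ n) (htend : Filter.Tendsto (cprod γ) Filter.atTop Filter.atTop)
    (ℓ : ℕ) :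
    valN (shiftBase γ (ℓ+1)) (shiftSeq (quasiGreedy γ) (ℓ+1)) ≤ 1 := by
  have hpos : ∀ n, 0 < γ n := fun n => lt_trans one_pos (hγ n)
  have hs := qsummable hγ
  have h := val_split hpos hs ℓ
  rw [qval hγ htend, qpartial hγ ℓ] at h
  have hP : 0 < cprod γ ℓ := cprod_pos hpos ℓ
  have hT : valN (shiftBase γ (ℓ+1)) (shiftSeq (quasiGreedy γ) (ℓ+1)) = qRem γ ℓ := by
    field_simp at h
    linarith
  rw [hT]
  exact (qRem_bounds hγ ℓ).2

end Quasi
end St19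
namespace St19
open Finset

lemma lex_of_val_lt {δ : ℕ → ℝ} (hpos : ∀ n, 0 < δ n) {b c : ℕ → ℕ}
    (hbs : Summable fun n => (b n : ℝ) / cprod δ n)
    (hcs : Summable fun n => (c n : ℝ) / cprod δ n)
    (hct : ∀ ℓ, valN (shiftBase δ (ℓ+1)) (shiftSeq c (ℓ+1)) ≤ 1)
    (hlt : valN δ b < valN δ c) : LexLt b c := by
  rcases lex_trichotomy b c with h | h | h
  · exact h
  · rw [h] at hlt; exact absurd hlt (lt_irrefl _)
  · exfalso
    obtain ⟨ℓ, hpre, hcb⟩ := h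
    have hP : 0 < cprod δ ℓ := cprod_pos hpos ℓ
    have hsplitb := val_split hpos hbs ℓ
    have hsplitc := val_split hpos hcs ℓ
    have hshpos : ∀ n, 0 < shiftBase δ (ℓ+1) n := fun n => hpos (ℓ+1+n)
    have hTb : 0 ≤ valN (shiftBase δ (ℓ+1)) (shiftSeq b (ℓ+1)) := valN_nonneg hshpos _
    have hTc := hct ℓ
    have hsum_eq : ∑ k ∈ range ℓ, (c k : ℝ) / cprod δ k
        = ∑ k ∈ range ℓ, (b k : ℝ) / cprod δ k :=
      Finset.sum_congr rfl fun k hk => by rw [hpre k (mem_range.1 hk)]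
    have hdig : (c ℓ : ℝ) + 1 ≤ (b ℓ : ℝ) := by exact_mod_cast hcb
    rw [sum_range_succ] at hsplitb hsplitc
    have hd1 : valN (shiftBase δ (ℓ+1)) (shiftSeq c (ℓ+1)) / cprod δ ℓ ≤ 1 / cprod δ ℓ := by
      gcongr
    have hd2 : 0 ≤ valN (shiftBase δ (ℓ+1)) (shiftSeq b (ℓ+1)) / cprod δ ℓ :=
      div_nonneg hTb hP.le
    have hd3 : (c ℓ : ℝ) / cprod δ ℓ + 1 / cprod δ ℓ ≤ (b ℓ : ℝ) / cprod δ ℓ := by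
      rw [← add_div]
      gcongr
    have h1 : valN δ c ≤ valN δ b := by
      rw [hsplitb, hsplitc, hsum_eq]
      linarith
    linarith

noncomputable def tailVal (β : ℕ → ℝ) (a : ℕ → ℕ) (n : ℕ) : ℝ :=
  valN (shiftBase β n) (shiftSeq a n)

section Greedy
variable {β : ℕ → ℝ} {a : ℕ → ℕ}

lemma tail0 (hpos : ∀ n, 0 < β n) (hsum : Summable fun n => (a n : ℝ) / cprod β n)
    (hval : valN β a = 1) : β 0 = a 0 + tailVal β a 1 := by
  have h := val_split hpos hsum 0
  rw [hval] at h
  rw [range_one, sum_singleton, cprod_zero] at h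
  have h0 : β 0 ≠ 0 := (hpos 0).ne'
  rw [tailVal]
  field_simp at h
  linarith

lemma tailS (hpos : ∀ n, 0 < β n) (hsum : Summable fun n => (a n : ℝ) / cprod β n)
    (hval : valN β a = 1) (n : ℕ) :
    β (n+1) * tailVal β a (n+1) = a (n+1) + tailVal β a (n+2) := by
  have h1 := val_split hpos hsum n
  have h2 := val_split hpos hsum (n+1)
  rw [hval] at h1 h2
  rw [sum_range_succ] at h2
  have hPn : 0 < cprod β n := cprod_pos hpos n
  have hPn1 : 0 < cprod β (n+1) := cprod_pos hpos (n+1)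
  have hc : cprod β (n+1) = cprod β n * β (n+1) := cprod_succ β n
  have e1 : tailVal β a (n+1) / cprod β n
      = (a (n+1) : ℝ) / cprod β (n+1) + tailVal β a (n+2) / cprod β (n+1) := by
    rw [tailVal, tailVal]
    linarith
  rw [hc] at e1
  have hb : β (n+1) ≠ 0 := (hpos (n+1)).ne'
  field_simp at e1
  nlinarith [e1]

lemma tailVal_nonneg (hpos : ∀ n, 0 < β n) (n : ℕ) : 0 ≤ tailVal β a n :=
  valN_nonneg (fun k => hpos (n+k)) _

lemma floor_nat_add {r : ℝ} (m : ℕ) (h0 : 0 ≤ r) (h1 : r < 1) : ⌊(m : ℝ) + r⌋ = (m : ℤ) := by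
  rw [Int.floor_eq_iff]
  constructor <;> push_cast <;> linarith

lemma greedy_iff (hβ1 : ∀ n, 1 < β n) (hsum : Summable fun n => (a n : ℝ) / cprod β n)
    (hval : valN β a = 1) :
    a = greedy β 1 ↔ ∀ n, tailVal β a (n+1) < 1 := by
  have hpos : ∀ n, 0 < β n := fun n => lt_trans one_pos (hβ1 n)
  constructor
  · intro hg
    have key : ∀ n, greedyRem β 1 n = tailVal β a (n+1) ∧ tailVal β a (n+1) < 1 := by
      intro n
      induction n with
      | zero =>
          have ha0 : (a 0 : ℝ) = (⌊β 0 * 1⌋ : ℤ) := by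
            rw [hg]
            show ((⌊β 0 * 1⌋).toNat : ℝ) = _
            have : (0:ℤ) ≤ ⌊β 0 * 1⌋ := Int.floor_nonneg.mpr (by nlinarith [hβ1 0])
            exact_mod_cast Int.toNat_of_nonneg this
          have h0 := tail0 hpos hsum hval
          have hr : greedyRem β 1 0 = β 0 * 1 - (⌊β 0 * 1⌋ : ℤ) := rfl
          have he : greedyRem β 1 0 = tailVal β a 1 := by
            rw [hr, ← ha0]; linarith
          refine ⟨he, ?_⟩
          rw [← he, hr]
          have := Int.lt_floor_add_one (β 0 * 1)
          linarith
      | succ n ih =>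
          have hS := tailS hpos hsum hval n
          have han : (a (n+1) : ℝ) = (⌊β (n+1) * greedyRem β 1 n⌋ : ℤ) := by
            rw [hg]
            show ((⌊β (n+1) * greedyRem β 1 n⌋).toNat : ℝ) = _
            have hrn : 0 ≤ greedyRem β 1 n := by
              rw [ih.1]; exact tailVal_nonneg hpos _
            have : (0:ℤ) ≤ ⌊β (n+1) * greedyRem β 1 n⌋ :=
              Int.floor_nonneg.mpr (mul_nonneg (hpos (n+1)).le hrn)
            exact_mod_cast Int.toNat_of_nonneg this
          have hr : greedyRem β 1 (n+1)
              = β (n+1) * greedyRem β 1 n - (⌊β (n+1) * greedyRem β 1 n⌋ : ℤ) := rfl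
          have he : greedyRem β 1 (n+1) = tailVal β a (n+2) := by
            rw [hr, ← han, ih.1]; linarith
          refine ⟨he, ?_⟩
          rw [← he, hr]
          have := Int.lt_floor_add_one (β (n+1) * greedyRem β 1 n)
          linarith
    intro n
    exact (key n).2
  · intro hT
    have key : ∀ n, a n = greedy β 1 n ∧ greedyRem β 1 n = tailVal β a (n+1) := by
      intro n
      induction n with
      | zero =>
          have h0 := tail0 hpos hsum hval
          have hfl : ⌊β 0 * 1⌋ = (a 0 : ℤ) := by
            rw [mul_one, h0]
            exact floor_nat_add (a 0) (tailVal_nonneg hpos 1) (hT 0)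
          constructor
          · show a 0 = (⌊β 0 * 1⌋).toNat
            rw [hfl]; simp
          · show β 0 * 1 - (⌊β 0 * 1⌋ : ℤ) = tailVal β a 1
            rw [hfl]; push_cast; linarith
      | succ n ih =>
          have hS := tailS hpos hsum hval n
          have hy : β (n+1) * greedyRem β 1 n = (a (n+1) : ℝ) + tailVal β a (n+2) := by
            rw [ih.2]; linarith
          have hfl : ⌊β (n+1) * greedyRem β 1 n⌋ = (a (n+1) : ℤ) := by
            rw [hy]
            exact floor_nat_add (a (n+1)) (tailVal_nonneg hpos (n+2)) (hT (n+1))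
          constructor
          · show a (n+1) = (⌊β (n+1) * greedyRem β 1 n⌋).toNat
            rw [hfl]; simp
          · show β (n+1) * greedyRem β 1 n - (⌊β (n+1) * greedyRem β 1 n⌋ : ℤ)
              = tailVal β a (n+2)
            rw [hfl, hy]; push_cast; linarith
    funext n
    exact (key n).1

end Greedy
end St19
namespace St19
open Finset

section Per
variable {β : ℕ → ℝ} {p : ℕ}

lemma shiftBase_per (hper : ∀ n, β (n + p) = β n) (n : ℕ) :
    shiftBase β (n + p) = shiftBase β n := by
  funext k
  have h := hper (n + k)
  simp only [shiftBase]
  rw [show n + p + k = n + k + p by omega, h]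

lemma shiftBase_mul (hper : ∀ n, β (n + p) = β n) (m i : ℕ) :
    shiftBase β (p * m + i) = shiftBase β i := by
  induction m with
  | zero => simp
  | succ m ih =>
      rw [show p * (m+1) + i = (p * m + i) + p by ring, shiftBase_per hper, ih]

lemma shiftBase_mul0 (hper : ∀ n, β (n + p) = β n) (m : ℕ) :
    shiftBase β (p * m) = β := by
  have h := shiftBase_mul hper m 0
  rw [Nat.add_zero] at h
  rw [h, shiftBase_zero]

lemma cprod_shift_tendsto (hpos : ∀ n, 0 < β n)
    (htend : Filter.Tendsto (cprod β) Filter.atTop Filter.atTop) (i : ℕ) :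
    Filter.Tendsto (cprod (shiftBase β (i+1))) Filter.atTop Filter.atTop := by
  have he : ∀ k, cprod (shiftBase β (i+1)) k = (cprod β i)⁻¹ * cprod β (i+1+k) := by
    intro k
    have h := cprod_shift (β := β) i k
    have h0 : cprod β i ≠ 0 := (cprod_pos hpos i).ne'
    field_simp
    linarith [h]
  have h1 : Filter.Tendsto (fun k => cprod β (i+1+k)) Filter.atTop Filter.atTop :=
    htend.comp (Filter.tendsto_atTop_atTop.mpr fun b => ⟨b, fun k hk => by omega⟩)
  have h2 : Filter.Tendsto (fun k => (cprod β i)⁻¹ * cprod β (i+1+k))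
      Filter.atTop Filter.atTop :=
    Filter.Tendsto.const_mul_atTop (inv_pos.mpr (cprod_pos hpos i)) h1
  exact h2.congr fun k => (he k).symm

end Per

section Main
variable {β : ℕ → ℝ} {p : ℕ} {a : ℕ → ℕ}

lemma partial_le_one (hβ1 : ∀ n, 1 < β n) (hp : 1 ≤ p)
    (hper : ∀ n, β (n + p) = β n)
    (hsum : Summable fun n => (a n : ℝ) / cprod β n) (hval : valN β a = 1)
    (hA : ∀ m, 1 ≤ m → LexLt (shiftSeq a (p * m)) a)
    (hB : ∀ m i, 1 ≤ i → i ≤ p - 1 →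
      LexLt (shiftSeq a (p * m + i)) (quasiGreedy (shiftBase β i))) :
    ∀ N n, 1 ≤ n →
      ∑ k ∈ range N, ((shiftSeq a n) k : ℝ) / cprod (shiftBase β n) k ≤ 1 := by
  have hpos : ∀ n, 0 < β n := fun n => lt_trans one_pos (hβ1 n)
  intro N
  induction N using Nat.strong_induction_on with
  | _ N IH =>
    intro n hn
    have key : ∀ c : ℕ → ℕ,
        (∀ M, ∑ k ∈ range M, (c k : ℝ) / cprod (shiftBase β n) k ≤ 1) →
        LexLt (shiftSeq a n) c →
        ∑ k ∈ range N, ((shiftSeq a n) k : ℝ) / cprod (shiftBase β n) k ≤ 1 := by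
      rintro c hc ⟨ℓ, hpre, hlt⟩
      by_cases hNl : N ≤ ℓ
      · calc ∑ k ∈ range N, ((shiftSeq a n) k : ℝ) / cprod (shiftBase β n) k
            = ∑ k ∈ range N, (c k : ℝ) / cprod (shiftBase β n) k :=
              Finset.sum_congr rfl fun k hk => by
                rw [hpre k (lt_of_lt_of_le (mem_range.1 hk) hNl)]
          _ ≤ 1 := hc N
      · push_neg at hNl
        have hshpos : ∀ k, 0 < shiftBase β n k := fun k => hpos (n+k)
        have hPl : 0 < cprod (shiftBase β n) ℓ := cprod_pos hshpos ℓ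
        set M := N - (ℓ+1) with hM
        have hNe : N = (ℓ+1) + M := by omega
        have hsplit := Finset.sum_range_add
          (fun k => ((shiftSeq a n) k : ℝ) / cprod (shiftBase β n) k) (ℓ+1) M
        -- bound the second chunk
        have hchunk : ∑ j ∈ range M,
            ((shiftSeq a n) (ℓ+1+j) : ℝ) / cprod (shiftBase β n) (ℓ+1+j)
            ≤ 1 / cprod (shiftBase β n) ℓ := by
          have hIH := IH M (by omega) (n+(ℓ+1)) (by omega)
          have hterm : ∀ j, ((shiftSeq a n) (ℓ+1+j) : ℝ) / cprod (shiftBase β n) (ℓ+1+j)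
              = (1 / cprod (shiftBase β n) ℓ)
                * (((shiftSeq a (n+(ℓ+1))) j : ℝ) / cprod (shiftBase β (n+(ℓ+1))) j) := by
            intro j
            have hc1 : cprod (shiftBase β n) ℓ * cprod (shiftBase (shiftBase β n) (ℓ+1)) j
                = cprod (shiftBase β n) (ℓ+1+j) := cprod_shift ℓ j
            rw [shiftBase_add] at hc1
            rw [← hc1]
            have e : (shiftSeq a n) (ℓ+1+j) = (shiftSeq a (n+(ℓ+1))) j := by
              simp only [shiftSeq]
              congr 1
              omega
            rw [e]
            have hQ : cprod (shiftBase β n) ℓ ≠ 0 := hPl.ne'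
            have hR : cprod (shiftBase β (n+(ℓ+1))) j ≠ 0 :=
              (cprod_pos (fun k => hpos (n+(ℓ+1)+k)) j).ne'
            field_simp
          calc ∑ j ∈ range M,
              ((shiftSeq a n) (ℓ+1+j) : ℝ) / cprod (shiftBase β n) (ℓ+1+j)
              = (1 / cprod (shiftBase β n) ℓ)
                * ∑ j ∈ range M, ((shiftSeq a (n+(ℓ+1))) j : ℝ) / cprod (shiftBase β (n+(ℓ+1))) j := by
                rw [Finset.mul_sum]
                exact Finset.sum_congr rfl fun j _ => hterm j
            _ ≤ (1 / cprod (shiftBase β n) ℓ) * 1 := by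
                have h0 : (0:ℝ) ≤ 1 / cprod (shiftBase β n) ℓ := by positivity
                exact mul_le_mul_of_nonneg_left hIH h0
            _ = 1 / cprod (shiftBase β n) ℓ := mul_one _
        -- bound the first chunk
        have hfirst : ∑ k ∈ range (ℓ+1), ((shiftSeq a n) k : ℝ) / cprod (shiftBase β n) k
            ≤ ∑ k ∈ range (ℓ+1), (c k : ℝ) / cprod (shiftBase β n) k
              - 1 / cprod (shiftBase β n) ℓ := by
          rw [sum_range_succ, sum_range_succ]
          have h1 : ∑ k ∈ range ℓ, ((shiftSeq a n) k : ℝ) / cprod (shiftBase β n) k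
              = ∑ k ∈ range ℓ, (c k : ℝ) / cprod (shiftBase β n) k :=
            Finset.sum_congr rfl fun k hk => by rw [hpre k (mem_range.1 hk)]
          have h2 : ((shiftSeq a n) ℓ : ℝ) + 1 ≤ (c ℓ : ℝ) := by exact_mod_cast hlt
          have h3 : ((shiftSeq a n) ℓ : ℝ) / cprod (shiftBase β n) ℓ
              ≤ ((c ℓ : ℝ) - 1) / cprod (shiftBase β n) ℓ := by
            gcongr
            linarith
          rw [h1]
          have h4 : ((c ℓ : ℝ) - 1) / cprod (shiftBase β n) ℓ
              = (c ℓ : ℝ) / cprod (shiftBase β n) ℓ - 1 / cprod (shiftBase β n) ℓ := by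
            ring
          linarith
        rw [hNe, hsplit]
        have := hc (ℓ+1)
        linarith
    rcases Nat.eq_zero_or_pos (n % p) with hi | hi
    · -- p ∣ n : compare with a itself
      have hdm := Nat.div_add_mod n p
      have hm : n = p * (n / p) := by omega
      have hm1 : 1 ≤ n / p := by
        rcases Nat.eq_zero_or_pos (n / p) with h0 | h0
        · rw [h0, Nat.mul_zero] at hm; omega
        · exact h0
      have hbase : shiftBase β n = β := by
        conv_lhs => rw [hm]
        exact shiftBase_mul0 hper _
      refine key a ?_ ?_
      · intro M
        rw [hbase]
        calc ∑ k ∈ range M, (a k : ℝ) / cprod β k ≤ valN β a := partial_le_val hpos hsum M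
          _ = 1 := hval
      · have := hA (n / p) hm1
        rwa [← hm] at this
    · -- n % p ≥ 1 : compare with the quasi-greedy expansion
      have hdm := Nat.div_add_mod n p
      have hi2 : n % p ≤ p - 1 := by
        have := Nat.mod_lt n (show 0 < p by omega)
        omega
      have hm : n = p * (n / p) + n % p := by omega
      have hbase : shiftBase β n = shiftBase β (n % p) := by
        conv_lhs => rw [hm]
        exact shiftBase_mul hper _ _
      refine key (quasiGreedy (shiftBase β (n % p))) ?_ ?_
      · intro M
        rw [hbase]
        exact qpartial_le (fun k => hβ1 (n % p + k)) M
      · have := hB (n / p) (n % p) hi hi2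
        rwa [← hm] at this
end Main
end St19
namespace St19
open Finset

section Main2
variable {β : ℕ → ℝ} {p : ℕ} {a : ℕ → ℕ}

lemma tailVal_eq (β : ℕ → ℝ) (a : ℕ → ℕ) (n : ℕ) :
    tailVal β a n = valN (shiftBase β n) (shiftSeq a n) := rfl

lemma summable_tail (hpos : ∀ n, 0 < β n)
    (hsum : Summable fun n => (a n : ℝ) / cprod β n) {n : ℕ} (hn : 1 ≤ n) :
    Summable fun k => ((shiftSeq a n) k : ℝ) / cprod (shiftBase β n) k := by
  obtain ⟨t, rfl⟩ : ∃ t, n = t + 1 := ⟨n - 1, by omega⟩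
  exact summable_shift hpos hsum t

lemma tail_le_one (hβ1 : ∀ n, 1 < β n) (hp : 1 ≤ p) (hper : ∀ n, β (n + p) = β n)
    (hsum : Summable fun n => (a n : ℝ) / cprod β n) (hval : valN β a = 1)
    (hA : ∀ m, 1 ≤ m → LexLt (shiftSeq a (p * m)) a)
    (hB : ∀ m i, 1 ≤ i → i ≤ p - 1 →
      LexLt (shiftSeq a (p * m + i)) (quasiGreedy (shiftBase β i))) :
    ∀ n, 1 ≤ n → tailVal β a n ≤ 1 := by
  intro n hn
  have h := partial_le_one hβ1 hp hper hsum hval hA hB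
  exact Real.tsum_le_of_sum_range_le
    (fun k => div_nonneg (Nat.cast_nonneg _)
      (cprod_pos (fun j => lt_trans one_pos (hβ1 (n+j))) k).le)
    (fun N => h N n hn)

lemma tail_lt_one (hβ1 : ∀ n, 1 < β n) (hp : 1 ≤ p) (hper : ∀ n, β (n + p) = β n)
    (hsum : Summable fun n => (a n : ℝ) / cprod β n) (hval : valN β a = 1)
    (hA : ∀ m, 1 ≤ m → LexLt (shiftSeq a (p * m)) a)
    (hB : ∀ m i, 1 ≤ i → i ≤ p - 1 →
      LexLt (shiftSeq a (p * m + i)) (quasiGreedy (shiftBase β i))) :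
    ∀ n, 1 ≤ n → tailVal β a n < 1 := by
  have hpos : ∀ n, 0 < β n := fun n => lt_trans one_pos (hβ1 n)
  have hle := tail_le_one hβ1 hp hper hsum hval hA hB
  intro n hn
  have hsumn := summable_tail hpos hsum hn
  have hshpos : ∀ k, 0 < shiftBase β n k := fun k => hpos (n+k)
  have hdm := Nat.div_add_mod n p
  rcases Nat.eq_zero_or_pos (n % p) with hi | hi
  · -- n is a positive multiple of p : compare with a itself
    by_contra hcon
    push_neg at hcon
    have heq : tailVal β a n = 1 := le_antisymm (hle n hn) hcon
    have hm : n = p * (n / p) := by omega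
    have hm1 : 1 ≤ n / p := by
      rcases Nat.eq_zero_or_pos (n / p) with h0 | h0
      · rw [h0, Nat.mul_zero] at hm; omega
      · exact h0
    have hbase : shiftBase β n = β := by
      conv_lhs => rw [hm]
      exact shiftBase_mul0 hper _
    obtain ⟨ℓ, hpre, hlt⟩ : LexLt (shiftSeq a n) a := by
      have := hA (n / p) hm1; rwa [← hm] at this
    have hQ : 0 < cprod β ℓ := cprod_pos hpos ℓ
    have hsplit := val_split hshpos hsumn ℓ
    rw [← tailVal_eq, heq, hbase, shiftSeq_add] at hsplit
    -- hsplit : 1 = ∑ k ∈ range (ℓ+1), (σⁿa)_k/cprod β k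
    --            + valN (shiftBase β (ℓ+1)) (shiftSeq a (n+(ℓ+1))) / cprod β ℓ
    have hb2 : shiftBase β (ℓ+1) = shiftBase β (n+(ℓ+1)) := by
      conv_rhs => rw [show n + (ℓ+1) = p * (n / p) + (ℓ+1) by omega]
      exact (shiftBase_mul hper _ _).symm
    have hT2le : valN (shiftBase β (ℓ+1)) (shiftSeq a (n+(ℓ+1))) ≤ 1 := by
      rw [hb2]
      exact hle (n+(ℓ+1)) (by omega)
    have hS : ∑ k ∈ range (ℓ+1), ((shiftSeq a n) k : ℝ) / cprod β k
        ≤ ∑ k ∈ range ℓ, (a k : ℝ) / cprod β k + ((a ℓ : ℝ) - 1) / cprod β ℓ := by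
      rw [sum_range_succ]
      have h1 : ∑ k ∈ range ℓ, ((shiftSeq a n) k : ℝ) / cprod β k
          = ∑ k ∈ range ℓ, (a k : ℝ) / cprod β k :=
        Finset.sum_congr rfl fun k hk => by rw [hpre k (mem_range.1 hk)]
      have h2 : ((shiftSeq a n) ℓ : ℝ) + 1 ≤ (a ℓ : ℝ) := by exact_mod_cast hlt
      have h3 : ((shiftSeq a n) ℓ : ℝ) / cprod β ℓ ≤ ((a ℓ : ℝ) - 1) / cprod β ℓ := by
        gcongr; linarith
      linarith
    have hpart : ∑ k ∈ range (ℓ+1), (a k : ℝ) / cprod β k ≤ 1 :=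
      (partial_le_val hpos hsum _).trans hval.le
    have hA1 : ∑ k ∈ range (ℓ+1), (a k : ℝ) / cprod β k = 1 := by
      rw [sum_range_succ] at hpart ⊢
      have hd : valN (shiftBase β (ℓ+1)) (shiftSeq a (n+(ℓ+1))) / cprod β ℓ ≤ 1 / cprod β ℓ := by
        gcongr
      have : ((a ℓ : ℝ) - 1) / cprod β ℓ + 1 / cprod β ℓ = (a ℓ : ℝ) / cprod β ℓ := by ring
      linarith
    have hsplita := val_split hpos hsum ℓ
    rw [hval, hA1] at hsplita
    have hTa0 : valN (shiftBase β (ℓ+1)) (shiftSeq a (ℓ+1)) = 0 := by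
      have h0 : valN (shiftBase β (ℓ+1)) (shiftSeq a (ℓ+1)) / cprod β ℓ = 0 := by linarith
      field_simp at h0
      simpa using h0
    have hzero : ∀ k, a (ℓ+1+k) = 0 := by
      intro k
      have hsumℓ := summable_shift hpos hsum ℓ
      have hterm : ((shiftSeq a (ℓ+1)) k : ℝ) / cprod (shiftBase β (ℓ+1)) k
          ≤ valN (shiftBase β (ℓ+1)) (shiftSeq a (ℓ+1)) :=
        Summable.le_tsum hsumℓ k fun j _ => div_nonneg (Nat.cast_nonneg _)
          (cprod_pos (fun m => hpos (ℓ+1+m)) j).le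
      rw [hTa0] at hterm
      have hnn : 0 ≤ ((shiftSeq a (ℓ+1)) k : ℝ) / cprod (shiftBase β (ℓ+1)) k :=
        div_nonneg (Nat.cast_nonneg _) (cprod_pos (fun m => hpos (ℓ+1+m)) k).le
      have h0 : ((shiftSeq a (ℓ+1)) k : ℝ) / cprod (shiftBase β (ℓ+1)) k = 0 :=
        le_antisymm hterm hnn
      have hcne : cprod (shiftBase β (ℓ+1)) k ≠ 0 := (cprod_pos (fun m => hpos (ℓ+1+m)) k).ne'
      rw [div_eq_zero_iff] at h0
      rcases h0 with h0 | h0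
      · exact_mod_cast h0
      · exact absurd h0 hcne
    have hT20 : valN (shiftBase β (ℓ+1)) (shiftSeq a (n+(ℓ+1))) = 0 := by
      rw [valN_def]
      have : ∀ k, ((shiftSeq a (n+(ℓ+1)) k : ℕ) : ℝ) / cprod (shiftBase β (ℓ+1)) k = 0 := by
        intro k
        have : a (n+(ℓ+1)+k) = 0 := by
          have := hzero (n+k)
          rw [show ℓ+1+(n+k) = n+(ℓ+1)+k by omega] at this
          exact this
        simp [shiftSeq, this]
      rw [tsum_congr this, tsum_zero]
    rw [hT20] at hsplit
    rw [zero_div, add_zero] at hsplit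
    rw [sum_range_succ] at hA1
    have h2 : ((shiftSeq a n) ℓ : ℝ) + 1 ≤ (a ℓ : ℝ) := by exact_mod_cast hlt
    have hQi : 0 < 1 / cprod β ℓ := by positivity
    -- 1 = S ≤ (∑_{k<ℓ} + (aℓ-1)/Q) = 1 - 1/Q < 1
    have : (1:ℝ) ≤ 1 - 1 / cprod β ℓ := by
      have e : ∑ k ∈ range ℓ, (a k : ℝ) / cprod β k + ((a ℓ : ℝ) - 1) / cprod β ℓ
          = 1 - 1 / cprod β ℓ := by
        have : ((a ℓ : ℝ) - 1) / cprod β ℓ = (a ℓ : ℝ) / cprod β ℓ - 1 / cprod β ℓ := by ring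
        linarith
      linarith
    linarith
  · -- n % p ≥ 1 : compare with the quasi-greedy expansion
    have hi2 : n % p ≤ p - 1 := by
      have := Nat.mod_lt n (show 0 < p by omega)
      omega
    have hm : n = p * (n / p) + n % p := by omega
    have hbase : shiftBase β n = shiftBase β (n % p) := by
      conv_lhs => rw [hm]
      exact shiftBase_mul hper _ _
    obtain ⟨ℓ, hpre, hlt⟩ : LexLt (shiftSeq a n) (quasiGreedy (shiftBase β n)) := by
      have := hB (n / p) (n % p) hi hi2
      rw [← hm] at this
      rwa [← hbase] at this
    have hδ1 : ∀ k, 1 < shiftBase β n k := fun k => hβ1 (n+k)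
    have hQ : 0 < cprod (shiftBase β n) ℓ := cprod_pos hshpos ℓ
    have hsplit := val_split hshpos hsumn ℓ
    rw [shiftBase_add, shiftSeq_add] at hsplit
    have hT2le : valN (shiftBase β (n+(ℓ+1))) (shiftSeq a (n+(ℓ+1))) ≤ 1 :=
      hle (n+(ℓ+1)) (by omega)
    have hqp := qpartial hδ1 ℓ
    have hS : ∑ k ∈ range (ℓ+1), ((shiftSeq a n) k : ℝ) / cprod (shiftBase β n) k
        ≤ ∑ k ∈ range (ℓ+1), ((quasiGreedy (shiftBase β n)) k : ℝ) / cprod (shiftBase β n) k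
          - 1 / cprod (shiftBase β n) ℓ := by
      rw [sum_range_succ, sum_range_succ]
      have h1 : ∑ k ∈ range ℓ, ((shiftSeq a n) k : ℝ) / cprod (shiftBase β n) k
          = ∑ k ∈ range ℓ, ((quasiGreedy (shiftBase β n)) k : ℝ) / cprod (shiftBase β n) k :=
        Finset.sum_congr rfl fun k hk => by rw [hpre k (mem_range.1 hk)]
      have h2 : ((shiftSeq a n) ℓ : ℝ) + 1 ≤ ((quasiGreedy (shiftBase β n)) ℓ : ℝ) := by
        exact_mod_cast hlt
      have h3 : ((shiftSeq a n) ℓ : ℝ) / cprod (shiftBase β n) ℓ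
          ≤ (((quasiGreedy (shiftBase β n)) ℓ : ℝ) - 1) / cprod (shiftBase β n) ℓ := by
        gcongr; linarith
      have h4 : (((quasiGreedy (shiftBase β n)) ℓ : ℝ) - 1) / cprod (shiftBase β n) ℓ
          = ((quasiGreedy (shiftBase β n)) ℓ : ℝ) / cprod (shiftBase β n) ℓ
            - 1 / cprod (shiftBase β n) ℓ := by ring
      linarith
    have hqrem : 0 < qRem (shiftBase β n) ℓ := (qRem_bounds hδ1 ℓ).1
    have hTdiv : valN (shiftBase β (n+(ℓ+1))) (shiftSeq a (n+(ℓ+1))) / cprod (shiftBase β n) ℓ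
        ≤ 1 / cprod (shiftBase β n) ℓ := by gcongr
    have hqQ : 0 < qRem (shiftBase β n) ℓ / cprod (shiftBase β n) ℓ := by positivity
    rw [tailVal_eq]
    calc valN (shiftBase β n) (shiftSeq a n)
        ≤ (1 - qRem (shiftBase β n) ℓ / cprod (shiftBase β n) ℓ)
          - 1 / cprod (shiftBase β n) ℓ + 1 / cprod (shiftBase β n) ℓ := by
          rw [← hqp]
          linarith [hsplit, hS, hTdiv]
      _ < 1 := by linarith

end Main2
end St19

theorem stmt_19 (β : ℕ → ℝ) (hβ : IsCantorBase β) (p : ℕ) (hp : 1 ≤ p)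
    (hper : ∀ n, β (n + p) = β n) (a : ℕ → ℕ)
    (hsum : Summable (fun n => (a n : ℝ) / cprod β n)) (hval : valN β a = 1) :
    a = greedy β 1 ↔
      ((∀ m : ℕ, 1 ≤ m → LexLt (shiftSeq a (p * m)) a) ∧
       (∀ m : ℕ, ∀ i : ℕ, 1 ≤ i → i ≤ p - 1 →
         LexLt (shiftSeq a (p * m + i)) (quasiGreedy (shiftBase β i)))) := by
  obtain ⟨hβ1, htend⟩ := hβ
  have hpos : ∀ n, 0 < β n := fun n => lt_trans one_pos (hβ1 n)
  constructor
  · intro hg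
    have hT : ∀ n, St19.tailVal β a (n+1) < 1 := (St19.greedy_iff hβ1 hsum hval).1 hg
    have hTle : ∀ ℓ, valN (shiftBase β (ℓ+1)) (shiftSeq a (ℓ+1)) ≤ 1 := fun ℓ => (hT ℓ).le
    constructor
    · intro m hm
      have hpm : 1 ≤ p * m := Nat.mul_pos (by omega) (by omega)
      obtain ⟨t, ht⟩ : ∃ t, p * m = t + 1 := ⟨p * m - 1, by omega⟩
      have hbase : shiftBase β (p * m) = β := St19.shiftBase_mul0 hper m
      apply St19.lex_of_val_lt hpos ?_ hsum hTle ?_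
      · have := St19.summable_shift hpos hsum t
        rwa [← ht, hbase] at this
      · rw [hval]
        have he : valN β (shiftSeq a (p * m)) = St19.tailVal β a (p * m) := by
          rw [St19.tailVal_eq, hbase]
        rw [he, ht]
        exact hT t
    · intro m i hi1 hi2
      obtain ⟨u, hu⟩ : ∃ u, i = u + 1 := ⟨i - 1, by omega⟩
      have hγ1 : ∀ k, 1 < shiftBase β i k := fun k => hβ1 (i+k)
      have hγpos : ∀ k, 0 < shiftBase β i k := fun k => lt_trans one_pos (hγ1 k)
      have hγtend : Filter.Tendsto (cprod (shiftBase β i)) Filter.atTop Filter.atTop := by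
        rw [hu]; exact St19.cprod_shift_tendsto hpos htend u
      have hbase : shiftBase β (p * m + i) = shiftBase β i := St19.shiftBase_mul hper m i
      obtain ⟨t, ht⟩ : ∃ t, p * m + i = t + 1 := ⟨p * m + i - 1, by omega⟩
      apply St19.lex_of_val_lt hγpos ?_ (St19.qsummable hγ1) (St19.qtail hγ1 hγtend) ?_
      · have := St19.summable_shift hpos hsum t
        rwa [← ht, hbase] at this
      · rw [St19.qval hγ1 hγtend]
        have he : valN (shiftBase β i) (shiftSeq a (p * m + i)) = St19.tailVal β a (p * m + i) := by
          rw [St19.tailVal_eq, hbase]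
        rw [he, ht]
        exact hT t
  · rintro ⟨hA, hB⟩
    refine (St19.greedy_iff hβ1 hsum hval).2 fun n => ?_
    exact St19.tail_lt_one hβ1 hp hper hsum hval hA hB (n+1) (by omega)
end
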